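/- arXiv:1510.01607 — 8 statements merged into one kernel-verified Lean document; each statement's English description precedes it below -/
import Mathlib

section
/- If s ∈ D_L(u) ∩ D_L(v), then u ≤_R v if and only if su ≤_R sv. -/
open CoxeterSystem

variable {A W : Type*} [Group W] {M : CoxeterMatrix A}

/-- Right weak order: `u ≤_R v` iff `ℓ(u) + ℓ(u⁻¹v) = ℓ(v)`. -/
def wle (cs : CoxeterSystem M W) (u v : W) : Prop :=
  cs.length u + cs.length (u⁻¹ * v) = cs.length v

/-- If `s ∈ D_L(u) ∩ D_L(v)`, then `u ≤_R v` iff `su ≤_R sv`. -/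
theorem stmt_0 (cs : CoxeterSystem M W) (u v : W) (i : A)
    (hu : cs.IsLeftDescent u i) (hv : cs.IsLeftDescent v i) :
    wle cs u v ↔ wle cs (cs.simple i * u) (cs.simple i * v) := by
  rw [cs.isLeftDescent_iff] at hu hv
  unfold wle
  have h : (cs.simple i * u)⁻¹ * (cs.simple i * v) = u⁻¹ * v := by
    group
  rw [h]
  omega
end

section
/- If s ∉ D_L(u) and s ∉ D_L(v), then u ≤_R v if and only if su ≤_R sv. -/
open CoxeterSystem

variable {A W : Type*} [Group W] {M : CoxeterMatrix A}

/-- If `s ∉ D_L(u)` and `s ∉ D_L(v)`, then `u ≤_R v` iff `su ≤_R sv`. -/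
theorem stmt_1 (cs : CoxeterSystem M W) (u v : W) (i : A)
    (hu : ¬ cs.IsLeftDescent u i) (hv : ¬ cs.IsLeftDescent v i) :
    wle cs u v ↔ wle cs (cs.simple i * u) (cs.simple i * v) := by
  rw [cs.not_isLeftDescent_iff] at hu hv
  unfold wle
  rw [hu, hv]
  have : (cs.simple i * u)⁻¹ * (cs.simple i * v) = u⁻¹ * v := by group
  rw [this]
  omega
end

section
/- For a Garside shadow B in (W,S), the B-projection is monotone with respect to the weak order: if u ≤_R w then π_B(u) ≤_R π_B(w). -/
open CoxeterSystem

variable {A W : Type*} [Group W] {M : CoxeterMatrix A}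

/-- A subset of `W` is bounded in the right weak order. -/
def Bounded (cs : CoxeterSystem M W) (X : Set W) : Prop :=
  ∃ g, ∀ x ∈ X, wle cs x g

/-- `m` is the join (least upper bound) of `X` in the right weak order. -/
def IsJoin (cs : CoxeterSystem M W) (X : Set W) (m : W) : Prop :=
  (∀ x ∈ X, wle cs x m) ∧ ∀ u, (∀ x ∈ X, wle cs x u) → wle cs m u

/-- `v` is a suffix of `w`: `ℓ(w v⁻¹) + ℓ(v) = ℓ(w)`. -/
def IsSuffix (cs : CoxeterSystem M W) (v w : W) : Prop :=
  cs.length (w * v⁻¹) + cs.length v = cs.length w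

/-- A Garside shadow: contains the simple reflections, is closed under joins of
bounded subsets, and is closed under taking suffixes. -/
def IsGarsideShadow (cs : CoxeterSystem M W) (Bs : Set W) : Prop :=
  (∀ i, cs.simple i ∈ Bs) ∧
  (∀ X ⊆ Bs, Bounded cs X → ∀ m, IsJoin cs X m → m ∈ Bs) ∧
  (∀ w ∈ Bs, ∀ v, IsSuffix cs v w → v ∈ Bs)

/-- `π` is the `B`-projection: `π w = ⋁ {g ∈ B | g ≤_R w}`. -/
def IsProj (cs : CoxeterSystem M W) (Bs : Set W) (π : W → W) : Prop :=
  ∀ w, π w ∈ Bs ∧ IsJoin cs {g | g ∈ Bs ∧ wle cs g w} (π w)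


lemma wle_trans (cs : CoxeterSystem M W) {a b c : W} (hab : wle cs a b)
    (hbc : wle cs b c) : wle cs a c := by
  unfold wle at *
  have h1 := cs.length_mul_le (a⁻¹ * b) (b⁻¹ * c)
  have h2 := cs.length_mul_le a (a⁻¹ * c)
  simp only [mul_assoc, mul_inv_cancel_left, inv_mul_cancel_left] at h1 h2
  omega

/-- The `B`-projection is monotone for the right weak order. -/
theorem stmt_4 (cs : CoxeterSystem M W) (Bs : Set W) (hB : IsGarsideShadow cs Bs)
    (π : W → W) (hπ : IsProj cs Bs π) (u w : W) (huw : wle cs u w) :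
    wle cs (π u) (π w) := by
  obtain ⟨_, hu1, hu2⟩ := hπ u
  obtain ⟨_, hw1, _⟩ := hπ w
  exact hu2 (π w) fun x ⟨hxB, hxu⟩ => hw1 x ⟨hxB, wle_trans cs hxu huw⟩
end

section
/- For a Garside shadow B in (W,S) and any w ∈ W, the left descent sets of w and π_B(w) coincide: D_L(w) = D_L(π_B(w)). -/
open CoxeterSystem

variable {A W : Type*} [Group W] {M : CoxeterMatrix A}

lemma wle_trans_s5 (cs : CoxeterSystem M W) {u v g : W} (h1 : wle cs u v) (h2 : wle cs v g) :
    wle cs u g := by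
  unfold wle at *
  have t1 : cs.length (u⁻¹ * g) ≤ cs.length (u⁻¹ * v) + cs.length (v⁻¹ * g) := by
    have := cs.length_mul_le (u⁻¹ * v) (v⁻¹ * g)
    simpa [mul_assoc] using this
  have t2 : cs.length g ≤ cs.length u + cs.length (u⁻¹ * g) := by
    have := cs.length_mul_le u (u⁻¹ * g)
    simpa [mul_assoc] using this
  omega

lemma simple_wle_iff (cs : CoxeterSystem M W) (w : W) (i : A) :
    wle cs (cs.simple i) w ↔ cs.IsLeftDescent w i := by
  rw [cs.isLeftDescent_iff]
  unfold wle
  rw [cs.length_simple, cs.inv_simple]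
  omega

/-- Left descent sets are invariant under Garside shadow projections:
`D_L(w) = D_L(π_B(w))`. -/
theorem stmt_5 (cs : CoxeterSystem M W) (Bs : Set W) (hB : IsGarsideShadow cs Bs)
    (π : W → W) (hπ : IsProj cs Bs π) (w : W) :
    {i | cs.IsLeftDescent w i} = {i | cs.IsLeftDescent (π w) i} := by
  obtain ⟨hmem, hub, hlub⟩ := hπ w
  have hπw : wle cs (π w) w := hlub w (fun x hx => hx.2)
  ext i
  simp only [Set.mem_setOf_eq, ← simple_wle_iff]
  constructor
  · intro h
    exact hub _ ⟨hB.1 i, h⟩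
  · intro h
    exact wle_trans_s5 cs h hπw
end

section
/- Let B be a Garside shadow in (W,S) and I ⊆ S. Then B ∩ W_I is a Garside shadow in the Coxeter system (W_I, I), where W_I is the standard parabolic subgroup generated by I. -/
open CoxeterSystem

variable {A W : Type*} [Group W] {M : CoxeterMatrix A}

/-- The standard parabolic subgroup `W_I`. -/
def parabolic (cs : CoxeterSystem M W) (I : Set A) : Subgroup W :=
  Subgroup.closure (cs.simple '' I)

/-- A Garside shadow in the Coxeter system `(W_I, I)` (whose length function and
weak order are the restrictions of those of `(W,S)`). -/
def IsGarsideShadowIn (cs : CoxeterSystem M W) (I : Set A) (Bs : Set W) : Prop :=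
  Bs ⊆ (parabolic cs I : Set W) ∧
  (∀ i ∈ I, cs.simple i ∈ Bs) ∧
  (∀ X ⊆ Bs, (∃ g ∈ parabolic cs I, ∀ x ∈ X, wle cs x g) →
    ∀ m, IsJoin cs X m → m ∈ Bs) ∧
  (∀ w ∈ Bs, ∀ v, IsSuffix cs v w → v ∈ Bs)

/-- `π'` is the `B'`-projection for the Coxeter system `(W_I, I)`. -/
def IsProjIn (cs : CoxeterSystem M W) (I : Set A) (Bs : Set W) (π' : W → W) : Prop :=
  ∀ w ∈ (parabolic cs I : Set W),
    π' w ∈ Bs ∧ IsJoin cs {g | g ∈ Bs ∧ wle cs g w} (π' w)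

/-- `p` is the map `w ↦ w_I` of the unique decomposition `w = w_I w^I`,
`w_I ∈ W_I`, `w^I ∈ X_I` (minimal coset representatives). -/
def IsParabolicProj (cs : CoxeterSystem M W) (I : Set A) (p : W → W) : Prop :=
  ∀ w, p w ∈ parabolic cs I ∧
    ∀ i ∈ I, cs.length ((p w)⁻¹ * w) < cs.length (cs.simple i * ((p w)⁻¹ * w))

namespace GS12

open Classical in
/-- Classical indicator with values in `ZMod 2`. -/
noncomputable def ind (P : Prop) : ZMod 2 := if P then 1 else 0

lemma ind_congr {P Q : Prop} (h : P ↔ Q) : ind P = ind Q := by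
  rw [show P = Q from propext h]

lemma ind_add_self (P : Prop) : ind P + ind P = 0 := CharTwo.add_self_eq_zero _

lemma ind_of (P : Prop) (h : P) : ind P = 1 := by simp [ind, h]

lemma ind_of_not (P : Prop) (h : ¬ P) : ind P = 0 := by simp [ind, h]

/-- The basic involution of the permutation representation on `W × ZMod 2`. -/
noncomputable def mu (cs : CoxeterSystem M W) (i : A) : Function.End (W × ZMod 2) :=
  fun q => (cs.simple i * q.1 * cs.simple i, q.2 + ind (q.1 = cs.simple i))

section Braid

variable (cs : CoxeterSystem M W) (i i' : A)

local notation "p" => cs.simple i * cs.simple i'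

lemma hpinv : (p)⁻¹ = cs.simple i' * cs.simple i := by
  rw [mul_inv_rev, cs.inv_simple, cs.inv_simple]

lemma hcomm : cs.simple i * (p) = (p)⁻¹ * cs.simple i := by
  rw [hpinv]
  simp [mul_assoc, cs.simple_mul_simple_cancel_left]

lemma hshift (k : ℕ) :
    (p)⁻¹ * (cs.simple i * (p) ^ k) * (p) = cs.simple i * (p) ^ (k + 2) := by
  have key : (p)⁻¹ * cs.simple i = cs.simple i * (p) := (hcomm cs i i').symm
  calc (p)⁻¹ * (cs.simple i * (p) ^ k) * (p)
      = ((p)⁻¹ * cs.simple i) * ((p) ^ k * (p)) := by group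
    _ = cs.simple i * (p) * (p) ^ (k + 1) := by rw [key, ← pow_succ]
    _ = cs.simple i * ((p) * (p) ^ (k + 1)) := by rw [mul_assoc]
    _ = cs.simple i * (p) ^ (k + 2) := by rw [← pow_succ']

lemma hconj (w : W) (k : ℕ) :
    ((p) * w * (p)⁻¹ = cs.simple i * (p) ^ k) ↔ (w = cs.simple i * (p) ^ (k + 2)) := by
  rw [← hshift cs i i' k]
  constructor
  · intro h
    rw [← h]
    group
  · intro h
    rw [h]
    group

lemma mu_mul_apply (w : W) (z : ZMod 2) :
    (mu cs i * mu cs i') (w, z) =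
      ((p) * w * (p)⁻¹,
        z + (ind (w = cs.simple i * (p) ^ 1)
          + ind (w = cs.simple i * (p) ^ 2))) := by
  have e1 : cs.simple i * (p) ^ 1 = cs.simple i' := by
    simp [mul_assoc, cs.simple_mul_simple_cancel_left]
  have e2 : cs.simple i * (p) ^ 2 = cs.simple i' * cs.simple i * cs.simple i' := by
    simp [pow_succ, mul_assoc, cs.simple_mul_simple_cancel_left]
  have e3 : (cs.simple i' * w * cs.simple i' = cs.simple i)
      ↔ (w = cs.simple i * (p) ^ 2) := by
    rw [e2]
    constructor
    · intro h
      rw [← h]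
      simp [mul_assoc, cs.simple_mul_simple_cancel_left, cs.simple_mul_simple_self]
    · intro h
      rw [h]
      simp [mul_assoc, cs.simple_mul_simple_cancel_left, cs.simple_mul_simple_self]
  show mu cs i (mu cs i' (w, z)) = _
  simp only [mu]
  refine Prod.ext ?_ ?_
  · show cs.simple i * (cs.simple i' * w * cs.simple i') * cs.simple i = _
    rw [hpinv]
    simp [mul_assoc]
  · show (z + ind (w = cs.simple i')) + ind (cs.simple i' * w * cs.simple i' = cs.simple i) = _
    rw [ind_congr e3, ind_congr (show (w = cs.simple i') ↔ (w = cs.simple i * (p) ^ 1) by rw [e1])]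
    ring

lemma mu_pow_apply (n : ℕ) (w : W) (z : ZMod 2) :
    ((mu cs i * mu cs i') ^ n) (w, z) =
      ((p) ^ n * w * ((p) ^ n)⁻¹,
        z + ∑ k ∈ Finset.range (2 * n), ind (w = cs.simple i * (p) ^ (k + 1))) := by
  induction n generalizing w z with
  | zero => simp [Function.End.one_def, ind]
  | succ n ih =>
      have happ : ((mu cs i * mu cs i') ^ (n + 1)) (w, z)
          = ((mu cs i * mu cs i') ^ n) ((mu cs i * mu cs i') (w, z)) := by
        rw [pow_succ, Function.End.mul_def]
        rfl
      rw [happ, mu_mul_apply, ih]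
      refine Prod.ext ?_ ?_
      · show (p) ^ n * ((p) * w * (p)⁻¹) * ((p) ^ n)⁻¹ = (p) ^ (n + 1) * w * ((p) ^ (n + 1))⁻¹
        rw [pow_succ]
        group
      · show z + (ind (w = cs.simple i * (p) ^ 1) + ind (w = cs.simple i * (p) ^ 2))
            + ∑ k ∈ Finset.range (2 * n), ind ((p) * w * (p)⁻¹ = cs.simple i * (p) ^ (k + 1))
          = z + ∑ k ∈ Finset.range (2 * (n + 1)), ind (w = cs.simple i * (p) ^ (k + 1))
        have hsh : ∀ k : ℕ, ind ((p) * w * (p)⁻¹ = cs.simple i * (p) ^ (k + 1))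
            = ind (w = cs.simple i * (p) ^ (k + 3)) := fun k => by
          rw [ind_congr (hconj cs i i' w (k + 1))]
        simp only [hsh]
        have h2 : 2 * (n + 1) = (2 * n + 1) + 1 := by ring
        rw [h2, Finset.sum_range_succ', Finset.sum_range_succ']
        have h3 : ∀ k : ℕ, k + 1 + 1 + 1 = k + 3 := fun k => by omega
        simp only [h3]
        ring

lemma braid : CoxeterMatrix.IsLiftable M (fun j => mu cs j) := by
  intro i i'
  funext q
  obtain ⟨w, z⟩ := q
  show ((mu cs i * mu cs i') ^ (M i i')) (w, z) = (w, z)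
  rw [mu_pow_apply cs i i' (M i i') w z]
  have hp : (cs.simple i * cs.simple i') ^ (M i i') = 1 := cs.simple_mul_simple_pow i i'
  have hsum : ∑ k ∈ Finset.range (2 * (M i i')),
      ind (w = cs.simple i * (cs.simple i * cs.simple i') ^ (k + 1)) = 0 := by
    rw [two_mul, Finset.sum_range_add, ← Finset.sum_add_distrib]
    apply Finset.sum_eq_zero
    intro k _
    have hper : (cs.simple i * cs.simple i') ^ (M i i' + (k + 1))
        = (cs.simple i * cs.simple i') ^ (k + 1) := by
      rw [pow_add, hp, one_mul]
    rw [← add_assoc (M i i') k 1] at hper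
    rw [hper, ind_add_self]
  rw [hp, hsum]
  simp

end Braid

section Rho

variable (cs : CoxeterSystem M W)

/-- The permutation representation of `W` on `W × ZMod 2`. -/
noncomputable def rho : W →* Function.End (W × ZMod 2) :=
  cs.lift ⟨fun j => mu cs j, braid cs⟩

lemma rho_simple (i : A) : rho cs (cs.simple i) = mu cs i :=
  cs.lift_apply_simple (braid cs) i

/-- The `ZMod 2`-valued cocycle recording (parity of) occurrences of `t` in right
inversion sequences of words for `w`. -/
noncomputable def Nn (w t : W) : ZMod 2 := (rho cs w (t, 0)).2

lemma rho_apply (w : W) : ∀ (t : W) (z : ZMod 2),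
    rho cs w (t, z) = (w * t * w⁻¹, z + Nn cs w t) := by
  induction w using cs.simple_induction_left with
  | one =>
      intro t z
      have h1 : rho cs 1 = 1 := map_one _
      have h2 : ∀ q : W × ZMod 2, rho cs (1 : W) q = q := by
        intro q; rw [h1]; rfl
      have hN : Nn cs 1 t = 0 := by
        unfold Nn; rw [h2]
      rw [h2, hN]
      simp
  | mul_simple_left w i ih =>
      intro t z
      have key : ∀ z' : ZMod 2, rho cs (cs.simple i * w) (t, z') =
          (cs.simple i * (w * t * w⁻¹) * cs.simple i,
            z' + Nn cs w t + ind (w * t * w⁻¹ = cs.simple i)) := by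
        intro z'
        have : rho cs (cs.simple i * w) (t, z')
            = rho cs (cs.simple i) (rho cs w (t, z')) := by
          rw [map_mul, Function.End.mul_def]; rfl
        rw [this, ih t z', rho_simple]
        show (cs.simple i * (w * t * w⁻¹) * cs.simple i,
          (z' + Nn cs w t) + ind (w * t * w⁻¹ = cs.simple i)) = _
        rw [add_assoc, ← add_assoc]
      have hN : Nn cs (cs.simple i * w) t
          = Nn cs w t + ind (w * t * w⁻¹ = cs.simple i) := by
        unfold Nn
        rw [key 0, zero_add]
        rfl
      rw [key z, hN]
      refine Prod.ext ?_ ?_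
      · show cs.simple i * (w * t * w⁻¹) * cs.simple i
            = (cs.simple i * w) * t * (cs.simple i * w)⁻¹
        rw [mul_inv_rev, cs.inv_simple]
        simp [mul_assoc]
      · show z + Nn cs w t + ind (w * t * w⁻¹ = cs.simple i) = z + _
        rw [add_assoc]

lemma Nn_one (t : W) : Nn cs 1 t = 0 := by
  unfold Nn
  rw [map_one]
  rfl

lemma Nn_mul (u v t : W) : Nn cs (u * v) t = Nn cs v t + Nn cs u (v * t * v⁻¹) := by
  unfold Nn
  have : rho cs (u * v) (t, 0) = rho cs u (rho cs v (t, 0)) := by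
    rw [map_mul, Function.End.mul_def]; rfl
  rw [this, rho_apply, rho_apply, rho_apply]
  simp [zero_add]

lemma Nn_simple (i : A) (t : W) : Nn cs (cs.simple i) t = ind (t = cs.simple i) := by
  unfold Nn
  rw [rho_simple]
  show (0 : ZMod 2) + ind (t = cs.simple i) = _
  rw [zero_add]

lemma Nn_mul_simple (w : W) (i : A) (t : W) :
    Nn cs (w * cs.simple i) t
      = Nn cs w (cs.simple i * t * cs.simple i) + ind (t = cs.simple i) := by
  rw [Nn_mul, Nn_simple, cs.inv_simple, add_comm]

lemma Nn_self {t : W} (ht : cs.IsReflection t) : Nn cs t t = 1 := by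
  obtain ⟨v, i, rfl⟩ := ht
  set t := v * cs.simple i * v⁻¹ with hts
  have h1 : Nn cs t t = Nn cs v⁻¹ t + Nn cs (v * cs.simple i) (v⁻¹ * t * v) := by
    rw [hts]
    rw [Nn_mul cs (v * cs.simple i) v⁻¹]
    rw [inv_inv]
  have h2 : v⁻¹ * t * v = cs.simple i := by
    rw [hts]; group
  have h3 : Nn cs (v * cs.simple i) (cs.simple i) = 1 + Nn cs v (cs.simple i) := by
    rw [Nn_mul_simple]
    rw [ind_of _ rfl]
    have : cs.simple i * cs.simple i * cs.simple i = cs.simple i := by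
      rw [cs.simple_mul_simple_self, one_mul]
    rw [this, add_comm]
  have h4 : Nn cs v (cs.simple i) + Nn cs v⁻¹ t = 0 := by
    have h5 : Nn cs (v⁻¹ * v) (cs.simple i) = 0 := by
      rw [inv_mul_cancel, Nn_one]
    rw [Nn_mul] at h5
    have h6 : v * cs.simple i * v⁻¹ = t := hts.symm
    rw [h6] at h5
    exact h5
  rw [h1, h2, h3]
  have hcomm4 : Nn cs v⁻¹ t + Nn cs v (cs.simple i) = 0 := by
    rw [add_comm]; exact h4
  have key : ∀ a b : ZMod 2, a + b = 0 → a + (1 + b) = 1 := by decide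
  exact key _ _ hcomm4

lemma Nn_mul_self {w t : W} (ht : cs.IsReflection t) :
    Nn cs (w * t) t = Nn cs w t + 1 := by
  rw [Nn_mul]
  have h1 : t * t * t⁻¹ = t := by rw [ht.inv, ht.mul_self, one_mul]
  rw [h1, Nn_self cs ht, add_comm]

lemma Nn_eq_zero_of_length_lt :
    ∀ (n : ℕ) (w : W), cs.length w ≤ n → ∀ t : W, cs.IsReflection t →
      cs.length w < cs.length (w * t) → Nn cs w t = 0 := by
  intro n
  induction n with
  | zero =>
      intro w hw t _ _
      have : w = 1 := cs.length_eq_zero_iff.mp (Nat.le_zero.mp hw)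
      rw [this, Nn_one]
  | succ n ih =>
      intro w hw t ht hlt
      by_cases hw1 : w = 1
      · rw [hw1, Nn_one]
      obtain ⟨j, hj⟩ := cs.exists_rightDescent_of_ne_one hw1
      have hj' : cs.length (w * cs.simple j) < cs.length w := hj
      by_cases htj : t = cs.simple j
      · exact absurd hlt (by rw [htj]; omega)
      · have hW : w = (w * cs.simple j) * cs.simple j := by
          rw [cs.simple_mul_simple_cancel_right]
        have hN : Nn cs w t = Nn cs (w * cs.simple j) (cs.simple j * t * cs.simple j) := by
          conv_lhs => rw [hW]
          rw [Nn_mul_simple, ind_of_not _ htj, add_zero]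
        have hu : cs.IsReflection (cs.simple j * t * cs.simple j) := by
          have := CoxeterSystem.IsReflection.conj ht (cs.simple j)
          rwa [cs.inv_simple] at this
        have hw'u : (w * cs.simple j) * (cs.simple j * t * cs.simple j)
            = w * t * cs.simple j := by
          simp [mul_assoc, cs.simple_mul_simple_cancel_left]
        have hlift : cs.length (w * cs.simple j)
            < cs.length ((w * cs.simple j) * (cs.simple j * t * cs.simple j)) := by
          rw [hw'u]
          have d := cs.length_mul_simple (w * t) j
          omega
        rw [hN]
        exact ih (w * cs.simple j) (by omega) _ hu hlift

lemma Nn_eq_one_of_length_lt {w t : W} (ht : cs.IsReflection t)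
    (hlt : cs.length (w * t) < cs.length w) : Nn cs w t = 1 := by
  have hwt : w * t * t = w := by rw [mul_assoc, ht.mul_self, mul_one]
  have h0 : Nn cs (w * t) t = 0 := by
    refine Nn_eq_zero_of_length_lt cs (cs.length (w * t)) _ le_rfl t ht ?_
    rw [hwt]
    exact hlt
  have h1 : Nn cs (w * t) t = Nn cs w t + 1 := Nn_mul_self cs ht
  have : ∀ a : ZMod 2, a + 1 = 0 → a = 1 := by decide
  exact this _ (h1 ▸ h0)

end Rho

section Parabolic

variable (cs : CoxeterSystem M W) (I : Set A)

lemma mem_of_Nn_one {w : W} (hw : w ∈ parabolic cs I) :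
    ∀ t : W, Nn cs w t = 1 → t ∈ parabolic cs I := by
  have hw' : w ∈ Subgroup.closure (cs.simple '' I) := hw
  refine Subgroup.closure_induction
    (p := fun x _ => ∀ t : W, Nn cs x t = 1 → t ∈ parabolic cs I) ?_ ?_ ?_ ?_ hw'
  · rintro x ⟨a, ha, rfl⟩ t hN
    by_cases h : t = cs.simple a
    · rw [h]
      exact Subgroup.subset_closure ⟨a, ha, rfl⟩
    · rw [Nn_simple, ind_of_not _ h] at hN
      exact absurd hN (by decide)
  · intro t hN
    rw [Nn_one] at hN
    exact absurd hN (by decide)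
  · intro x y hx hy px py t hN
    rw [Nn_mul] at hN
    have key : ∀ a b : ZMod 2, a + b = 1 → a = 1 ∨ b = 1 := by decide
    rcases key _ _ hN with h | h
    · exact py t h
    · have hmem : y * t * y⁻¹ ∈ parabolic cs I := px _ h
      have hyP : y ∈ parabolic cs I := hy
      have hconj : y⁻¹ * (y * t * y⁻¹) * y = t := by group
      rw [← hconj]
      exact mul_mem (mul_mem (inv_mem hyP) hmem) hyP
  · intro x hx px t hN
    have hxP : x ∈ parabolic cs I := hx
    have h0 : Nn cs (x * x⁻¹) t = 0 := by rw [mul_inv_cancel, Nn_one]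
    rw [Nn_mul] at h0
    have key : ∀ a b : ZMod 2, a + b = 0 → a = 1 → b = 1 := by decide
    have h1 : Nn cs x (x⁻¹ * t * x⁻¹⁻¹) = 1 := key _ _ h0 hN
    rw [inv_inv] at h1
    have hmem : x⁻¹ * t * x ∈ parabolic cs I := px _ h1
    have hconj : x * (x⁻¹ * t * x) * x⁻¹ = t := by group
    rw [← hconj]
    exact mul_mem (mul_mem hxP hmem) (inv_mem hxP)

lemma simple_mem_of_descent {w : W} (hw : w ∈ parabolic cs I) (i : A)
    (hd : cs.length (w * cs.simple i) < cs.length w) : cs.simple i ∈ parabolic cs I :=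
  mem_of_Nn_one cs I hw _ (Nn_eq_one_of_length_lt cs (cs.isReflection_simple i) hd)

lemma mem_of_wle : ∀ (n : ℕ) (u w : W), cs.length (u⁻¹ * w) ≤ n →
    wle cs u w → w ∈ parabolic cs I → u ∈ parabolic cs I := by
  intro n
  induction n with
  | zero =>
      intro u w hn _ hw
      have h1 : u = w := inv_mul_eq_one.mp (cs.length_eq_zero_iff.mp (Nat.le_zero.mp hn))
      rw [h1]; exact hw
  | succ n ih =>
      intro u w hn hwle hw
      by_cases h0 : cs.length (u⁻¹ * w) = 0
      · have h1 : u = w := inv_mul_eq_one.mp (cs.length_eq_zero_iff.mp h0)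
        rw [h1]; exact hw
      have hne : u⁻¹ * w ≠ 1 := fun h => h0 (by rw [h, cs.length_one])
      obtain ⟨i, hi⟩ := cs.exists_rightDescent_of_ne_one hne
      have hi' : cs.length (u⁻¹ * w * cs.simple i) < cs.length (u⁻¹ * w) := hi
      have d1 := cs.length_mul_simple (u⁻¹ * w) i
      have hwle' : cs.length u + cs.length (u⁻¹ * w) = cs.length w := hwle
      have hrw : w * cs.simple i = u * (u⁻¹ * w * cs.simple i) := by group
      have hb : cs.length (w * cs.simple i)
          ≤ cs.length u + cs.length (u⁻¹ * w * cs.simple i) := by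
        rw [hrw]; exact cs.length_mul_le _ _
      have d2 := cs.length_mul_simple w i
      have hds : cs.length (w * cs.simple i) < cs.length w := by omega
      have heq : cs.length u + cs.length (u⁻¹ * w * cs.simple i)
          = cs.length (w * cs.simple i) := by omega
      have hsP : cs.simple i ∈ parabolic cs I := simple_mem_of_descent cs I hw i hds
      have hwP' : w * cs.simple i ∈ parabolic cs I := mul_mem hw hsP
      have harg : u⁻¹ * (w * cs.simple i) = u⁻¹ * w * cs.simple i := by rw [mul_assoc]
      refine ih u (w * cs.simple i) ?_ ?_ hwP'
      · rw [harg]; omega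
      · show cs.length u + cs.length (u⁻¹ * (w * cs.simple i)) = cs.length (w * cs.simple i)
        rw [harg]; exact heq

end Parabolic

end GS12

/-- If `B` is a Garside shadow in `(W,S)`, then `B ∩ W_I` is a Garside shadow in
the Coxeter system `(W_I, I)`. -/
theorem stmt_12 (cs : CoxeterSystem M W) (Bs : Set W) (hB : IsGarsideShadow cs Bs)
    (I : Set A) :
    IsGarsideShadowIn cs I (Bs ∩ (parabolic cs I : Set W)) := by
  obtain ⟨hS, hJ, hSuf⟩ := hB
  refine ⟨Set.inter_subset_right, ?_, ?_, ?_⟩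
  · intro i hi
    exact ⟨hS i, Subgroup.subset_closure ⟨i, hi, rfl⟩⟩
  · rintro X hX ⟨g, hgP, hub⟩ m hm
    have hmB : m ∈ Bs := hJ X (fun x hx => (hX hx).1) ⟨g, hub⟩ m hm
    have hmg : wle cs m g := hm.2 g hub
    have hmP : m ∈ parabolic cs I :=
      GS12.mem_of_wle cs I (cs.length (m⁻¹ * g)) m g le_rfl hmg hgP
    exact ⟨hmB, hmP⟩
  · rintro w ⟨hwB, hwP⟩ v hv
    have hvB : v ∈ Bs := hSuf w hwB v hv
    have hvv : (w * v⁻¹)⁻¹ * w = v := by group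
    have hwle : wle cs (w * v⁻¹) w := by
      show cs.length (w * v⁻¹) + cs.length ((w * v⁻¹)⁻¹ * w) = cs.length w
      rw [hvv]
      exact hv
    have hP : w * v⁻¹ ∈ parabolic cs I :=
      GS12.mem_of_wle cs I (cs.length ((w * v⁻¹)⁻¹ * w)) _ w le_rfl hwle hwP
    have hvP : v ∈ parabolic cs I := by
      rw [← hvv]
      exact mul_mem (inv_mem hP) hwP
    exact ⟨hvB, hvP⟩
end

section
/- Let B be a Garside shadow in (W,S) and I ⊆ S. The restriction of π_B to W_I equals the (B ∩ W_I)-projection π_{B ∩ W_I} : W_I → B ∩ W_I. -/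
open CoxeterSystem

variable {A W : Type*} [Group W] {M : CoxeterMatrix A}

/-! ### Auxiliary development: the reflection cocycle -/

/-- The twisted group `(W → ZMod 2) ⋊ W`. -/
@[ext] structure Gr (W : Type*) where
  f : W → ZMod 2
  el : W

namespace Gr

variable {W : Type*} [Group W]

instance : Mul (Gr W) :=
  ⟨fun a b => ⟨a.f + fun t => b.f (a.el⁻¹ * t * a.el), a.el * b.el⟩⟩
instance : One (Gr W) := ⟨⟨0, 1⟩⟩
instance : Inv (Gr W) :=
  ⟨fun a => ⟨fun t => a.f (a.el * t * a.el⁻¹), a.el⁻¹⟩⟩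

@[simp] lemma mul_f_apply (a b : Gr W) (t : W) :
    (a * b).f t = a.f t + b.f (a.el⁻¹ * t * a.el) := rfl
@[simp] lemma mul_el (a b : Gr W) : (a * b).el = a.el * b.el := rfl
@[simp] lemma one_f_apply (t : W) : (1 : Gr W).f t = 0 := rfl
@[simp] lemma one_el : (1 : Gr W).el = 1 := rfl
@[simp] lemma inv_f_apply (a : Gr W) (t : W) :
    a⁻¹.f t = a.f (a.el * t * a.el⁻¹) := rfl
@[simp] lemma inv_el (a : Gr W) : a⁻¹.el = a.el⁻¹ := rfl

lemma mul_f (a b : Gr W) : (a * b).f = a.f + fun t => b.f (a.el⁻¹ * t * a.el) := rfl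

instance : Group (Gr W) where
  mul_assoc a b c := by
    ext t
    · simp [mul_assoc, add_assoc]
    · simp [mul_assoc]
  one_mul a := by
    ext t <;> simp
  mul_one a := by
    ext t <;> simp
  inv_mul_cancel a := by
    have h2 : ∀ x : ZMod 2, x + x = 0 := by decide
    ext t
    · simp [h2]
    · simp

end Gr

open Classical in
/-- Indicator function. -/
noncomputable def dd {W : Type*} (x : W) : W → ZMod 2 := fun t => if t = x then 1 else 0

lemma dd_self {W : Type*} (x : W) : dd x x = 1 := by simp [dd]

lemma dd_ne {W : Type*} {x t : W} (h : t ≠ x) : dd x t = 0 := by simp [dd, h]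

lemma dd_conj {W : Type*} [Group W] (a x : W) :
    (fun t => dd x (a⁻¹ * t * a)) = dd (a * x * a⁻¹) := by
  funext t
  classical
  unfold dd
  congr 1
  simp only [eq_iff_iff]
  constructor
  · intro h; rw [← h]; group
  · intro h; rw [h]; group

section Cocycle

variable (cs : CoxeterSystem M W)

lemma liftable_cocycle :
    CoxeterMatrix.IsLiftable M (fun i => (⟨dd (cs.simple i), cs.simple i⟩ : Gr W)) := by
  intro i i'
  set u := cs.simple i * cs.simple i' with hu
  have hcomm : ∀ n : ℕ, cs.simple i * (u ^ n)⁻¹ = u ^ n * cs.simple i := by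
    intro n
    induction n with
    | zero => simp
    | succ n ih =>
      have h1 : cs.simple i * u⁻¹ = u * cs.simple i := by
        rw [hu]
        simp only [mul_inv_rev, cs.inv_simple]
        group
      calc cs.simple i * (u ^ (n + 1))⁻¹
          = cs.simple i * u⁻¹ * (u ^ n)⁻¹ := by rw [pow_succ]; group
        _ = u * (cs.simple i * (u ^ n)⁻¹) := by rw [h1]; group
        _ = u ^ (n + 1) * cs.simple i := by rw [ih, pow_succ]; group
  have hconj : ∀ n : ℕ, u ^ n * cs.simple i * (u ^ n)⁻¹ = u ^ (2 * n) * cs.simple i := by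
    intro n
    rw [mul_assoc, hcomm n, two_mul, pow_add]
    group
  set x : Gr W := (⟨dd (cs.simple i), cs.simple i⟩ : Gr W) * ⟨dd (cs.simple i'), cs.simple i'⟩
    with hx
  have hxf : x.f = dd (u ^ 0 * cs.simple i) + dd (u ^ 1 * cs.simple i) := by
    rw [hx]
    show dd (cs.simple i) + (fun t => dd (cs.simple i') ((cs.simple i)⁻¹ * t * cs.simple i)) = _
    rw [dd_conj]
    congr 1
    · rw [pow_zero, one_mul]
    · rw [pow_one, cs.inv_simple, hu]
  have hxel : x.el = u := rfl
  have hpow : ∀ n : ℕ, x ^ n =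
      ⟨∑ j ∈ Finset.range (2 * n), dd (u ^ j * cs.simple i), u ^ n⟩ := by
    intro n
    induction n with
    | zero => ext t <;> simp
    | succ n ih =>
      rw [pow_succ, ih]
      ext t
      · show (_ + fun t => x.f ((u ^ n)⁻¹ * t * u ^ n)) t = _
        rw [hxf]
        have e1 : (fun t => (dd (u ^ 0 * cs.simple i) + dd (u ^ 1 * cs.simple i))
            ((u ^ n)⁻¹ * t * u ^ n)) =
            dd (u ^ (2 * n) * cs.simple i) + dd (u ^ (2 * n + 1) * cs.simple i) := by
          have : (fun t => (dd (u ^ 0 * cs.simple i) + dd (u ^ 1 * cs.simple i))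
              ((u ^ n)⁻¹ * t * u ^ n)) =
              (fun t => dd (u ^ 0 * cs.simple i) ((u ^ n)⁻¹ * t * u ^ n)) +
              fun t => dd (u ^ 1 * cs.simple i) ((u ^ n)⁻¹ * t * u ^ n) := rfl
          rw [this, dd_conj, dd_conj]
          congr 1
          · rw [pow_zero, one_mul, hconj n]
          · congr 1
            rw [show u ^ n * (u ^ 1 * cs.simple i) * (u ^ n)⁻¹
                = u * (u ^ n * cs.simple i * (u ^ n)⁻¹) by group, hconj n, pow_succ']
            group
        rw [show (2 * (n + 1)) = (2 * n) + 1 + 1 by ring, Finset.sum_range_succ,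
          Finset.sum_range_succ]
        simp only [Pi.add_apply] at e1 ⊢
        have := congrFun e1 t
        simp only [Pi.add_apply] at this
        rw [this]
        ring
      · show u ^ n * x.el = _
        rw [hxel, pow_succ]
  have hget := hpow (M i i')
  rw [hget]
  have hum : u ^ (M i i') = 1 := cs.simple_mul_simple_pow i i'
  ext t
  · show (∑ j ∈ Finset.range (2 * M i i'), dd (u ^ j * cs.simple i)) t = (0 : W → ZMod 2) t
    rw [two_mul, Finset.sum_range_add]
    have : ∀ j, dd (u ^ (M i i' + j) * cs.simple i) = dd (u ^ j * cs.simple i) := by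
      intro j
      rw [pow_add, hum, one_mul]
    simp only [this]
    simp only [Pi.add_apply, Pi.zero_apply]
    have h2 : ∀ x : ZMod 2, x + x = 0 := by decide
    exact h2 _
  · show u ^ (M i i') = 1
    exact hum

/-- The reflection cocycle homomorphism. -/
noncomputable def coc : W →* Gr W :=
  cs.lift ⟨fun i => (⟨dd (cs.simple i), cs.simple i⟩ : Gr W), liftable_cocycle cs⟩

@[simp] lemma coc_simple (i : A) :
    coc cs (cs.simple i) = ⟨dd (cs.simple i), cs.simple i⟩ :=
  cs.lift_apply_simple (liftable_cocycle cs) i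

lemma leftInvSeq_cons (i : A) (ψ : List A) :
    cs.leftInvSeq (i :: ψ) =
      cs.simple i :: (cs.leftInvSeq ψ).map (MulAut.conj (cs.simple i)) := rfl

lemma sum_map_dd_conj (a : W) (l : List W) :
    ((l.map fun x => dd (a * x * a⁻¹)).sum : W → ZMod 2) =
      fun t => (l.map dd).sum (a⁻¹ * t * a) := by
  induction l with
  | nil => funext t; simp
  | cons b l ih =>
    funext t
    simp only [List.map_cons, List.sum_cons, Pi.add_apply]
    rw [← dd_conj a b]
    have := congrFun ih t
    simp only [Pi.add_apply] at this ⊢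
    rw [this]

/-- The first component of `coc` of a word counts the left inversion sequence. -/
lemma coc_wordProd (ψ : List A) :
    (coc cs (cs.wordProd ψ)).f = ((cs.leftInvSeq ψ).map dd).sum := by
  induction ψ with
  | nil =>
    rw [cs.wordProd_nil, map_one]
    funext t
    simp
  | cons i ψ ih =>
    rw [cs.wordProd_cons, map_mul, coc_simple, leftInvSeq_cons]
    show dd (cs.simple i) + (fun t => (coc cs (cs.wordProd ψ)).f ((cs.simple i)⁻¹ * t * cs.simple i)) = _
    rw [ih]
    simp only [List.map_cons, List.sum_cons]
    congr 1
    have : ((cs.leftInvSeq ψ).map (MulAut.conj (cs.simple i))).map dd =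
        (cs.leftInvSeq ψ).map fun x => dd (cs.simple i * x * (cs.simple i)⁻¹) := by
      rw [List.map_map]
      rfl
    rw [this, sum_map_dd_conj]

lemma sum_dd_not_mem {t : W} {l : List W} (h : t ∉ l) : ((l.map dd).sum : W → ZMod 2) t = 0 := by
  induction l with
  | nil => simp
  | cons a l ih =>
    simp only [List.map_cons, List.sum_cons, Pi.add_apply]
    have h1 : t ≠ a := by rintro rfl; exact h (List.mem_cons_self)
    rw [dd_ne h1, ih (fun hm => h (List.mem_cons_of_mem a hm))]
    simp

lemma sum_dd_nodup_mem {t : W} {l : List W} (hn : l.Nodup) (h : t ∈ l) :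
    ((l.map dd).sum : W → ZMod 2) t = 1 := by
  induction l with
  | nil => simp at h
  | cons a l ih =>
    simp only [List.map_cons, List.sum_cons, Pi.add_apply]
    rcases List.mem_cons.mp h with rfl | hm
    · rw [dd_self, sum_dd_not_mem (List.nodup_cons.mp hn).1]
      simp
    · have hne : t ≠ a := fun he => (List.nodup_cons.mp hn).1 (he ▸ hm)
      rw [dd_ne hne, ih (List.nodup_cons.mp hn).2 hm]
      simp

/-- Exchange-type lemma: if `s i` is a left descent of `w` then `s i` belongs to the
left inversion sequence of *any* word for `w`. -/
lemma simple_mem_leftInvSeq_of_descent {w : W} {i : A}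
    (hd : cs.length (cs.simple i * w) < cs.length w)
    (ψ : List A) (hψ : cs.wordProd ψ = w) : cs.simple i ∈ cs.leftInvSeq ψ := by
  -- build a reduced word for w starting with i
  obtain ⟨ω', hlen', hw'⟩ := cs.exists_reduced_word (cs.simple i * w)
  have hπ : cs.wordProd (i :: ω') = w := by
    rw [cs.wordProd_cons, ← hw', ← mul_assoc, cs.simple_mul_simple_self, one_mul]
  have hred : cs.IsReduced (i :: ω') := by
    have h1 : cs.length w ≤ (i :: ω').length := by
      rw [← hπ]; exact cs.length_wordProd_le _
    have h2 : (i :: ω').length = cs.length (cs.simple i * w) + 1 := by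
      rw [List.length_cons, ← (hlen' : cs.length (cs.wordProd ω') = ω'.length), ← hw']
    unfold CoxeterSystem.IsReduced
    rw [hπ]
    omega
  have hmem : cs.simple i ∈ cs.leftInvSeq (i :: ω') := by
    rw [leftInvSeq_cons]; exact List.mem_cons_self
  have hval : (coc cs w).f (cs.simple i) = 1 := by
    rw [← hπ, coc_wordProd]
    exact sum_dd_nodup_mem (hred.nodup_leftInvSeq) hmem
  by_contra hne
  rw [← hψ, coc_wordProd] at hval
  rw [sum_dd_not_mem hne] at hval
  exact absurd hval (by decide)

variable {I : Set A}

lemma simple_mem_parabolic {i : A} (hi : i ∈ I) : cs.simple i ∈ parabolic cs I :=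
  Subgroup.subset_closure ⟨i, hi, rfl⟩

lemma wordProd_mem_parabolic {ψ : List A} (hψ : ∀ a ∈ ψ, a ∈ I) :
    cs.wordProd ψ ∈ parabolic cs I := by
  induction ψ with
  | nil => rw [cs.wordProd_nil]; exact one_mem _
  | cons i ψ ih =>
    rw [cs.wordProd_cons]
    exact mul_mem (simple_mem_parabolic cs (hψ i (List.mem_cons_self)))
      (ih fun a ha => hψ a (List.mem_cons_of_mem _ ha))

lemma exists_word_of_mem_parabolic {w : W} (hw : w ∈ parabolic cs I) :
    ∃ ψ : List A, (∀ a ∈ ψ, a ∈ I) ∧ cs.wordProd ψ = w := by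
  induction hw using Subgroup.closure_induction with
  | mem x hx =>
    obtain ⟨i, hi, rfl⟩ := hx
    exact ⟨[i], by simpa using hi, by simp [cs.wordProd_singleton]⟩
  | one => exact ⟨[], by simp, cs.wordProd_nil⟩
  | mul x y hx hy ihx ihy =>
    obtain ⟨ψ₁, h₁, rfl⟩ := ihx
    obtain ⟨ψ₂, h₂, rfl⟩ := ihy
    refine ⟨ψ₁ ++ ψ₂, ?_, cs.wordProd_append ψ₁ ψ₂⟩
    intro a ha
    rcases List.mem_append.mp ha with h | h
    · exact h₁ a h
    · exact h₂ a h
  | inv x hx ihx =>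
    obtain ⟨ψ, h, rfl⟩ := ihx
    exact ⟨ψ.reverse, fun a ha => h a (List.mem_reverse.mp ha), cs.wordProd_reverse ψ⟩

lemma leftInvSeq_mem_parabolic :
    ∀ ψ : List A, (∀ a ∈ ψ, a ∈ I) → ∀ t ∈ cs.leftInvSeq ψ, t ∈ parabolic cs I := by
  intro ψ
  induction ψ with
  | nil => intro _ t ht; simp at ht
  | cons i ψ ih =>
    intro hψ t ht
    rw [leftInvSeq_cons] at ht
    have hsi : cs.simple i ∈ parabolic cs I :=
      simple_mem_parabolic cs (hψ i (List.mem_cons_self))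
    rcases List.mem_cons.mp ht with rfl | hm
    · exact hsi
    · obtain ⟨x, hx, rfl⟩ := List.mem_map.mp hm
      have hxp := ih (fun a ha => hψ a (List.mem_cons_of_mem _ ha)) x hx
      show cs.simple i * x * (cs.simple i)⁻¹ ∈ _
      exact mul_mem (mul_mem hsi hxp) (inv_mem hsi)

/-- Main lemma: prefixes (in right weak order) of elements of `W_I` lie in `W_I`. -/
lemma prefix_mem_parabolic :
    ∀ n (g w : W), cs.length g = n → w ∈ parabolic cs I → wle cs g w →
      g ∈ parabolic cs I := by
  intro n
  induction n using Nat.strong_induction_on with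
  | _ n ih =>
    intro g w hlg hw hgw
    rcases Nat.eq_zero_or_pos n with hn | hn
    · have : g = 1 := cs.length_eq_zero_iff.mp (hlg.trans hn)
      rw [this]; exact one_mem _
    · have hg1 : g ≠ 1 := by
        intro h; rw [h, cs.length_one] at hlg; omega
      obtain ⟨i, hi⟩ := cs.exists_rightDescent_of_ne_one hg1
      unfold CoxeterSystem.IsRightDescent at hi
      have hlen' : cs.length (g * cs.simple i) + 1 = cs.length g := by
        rcases cs.length_mul_simple g i with h | h <;> omega
      have hginv : (g * cs.simple i)⁻¹ * w = cs.simple i * (g⁻¹ * w) := by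
        rw [mul_inv_rev, cs.inv_simple, mul_assoc]
      have hA : cs.length ((g * cs.simple i)⁻¹ * w) ≤ cs.length (g⁻¹ * w) + 1 := by
        rw [hginv]
        calc cs.length (cs.simple i * (g⁻¹ * w)) ≤
            cs.length (cs.simple i) + cs.length (g⁻¹ * w) := cs.length_mul_le _ _
          _ = cs.length (g⁻¹ * w) + 1 := by rw [cs.length_simple]; ring
      have hB : cs.length w ≤
          cs.length (g * cs.simple i) + cs.length ((g * cs.simple i)⁻¹ * w) := by
        calc cs.length w = cs.length ((g * cs.simple i) * ((g * cs.simple i)⁻¹ * w)) := by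
              rw [← mul_assoc, mul_inv_cancel, one_mul]
          _ ≤ _ := cs.length_mul_le _ _
      have hwle' : wle cs (g * cs.simple i) w := by
        unfold wle at hgw ⊢
        omega
      have hg'mem : g * cs.simple i ∈ parabolic cs I :=
        ih (cs.length (g * cs.simple i)) (by omega) (g * cs.simple i) w rfl hw hwle'
      have hvmem : (g * cs.simple i)⁻¹ * w ∈ parabolic cs I := mul_mem (inv_mem hg'mem) hw
      have hsiv : cs.simple i * ((g * cs.simple i)⁻¹ * w) = g⁻¹ * w := by
        rw [hginv, ← mul_assoc, cs.simple_mul_simple_self, one_mul]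
      have hdesc : cs.length (cs.simple i * ((g * cs.simple i)⁻¹ * w)) <
          cs.length ((g * cs.simple i)⁻¹ * w) := by
        rw [hsiv]
        unfold wle at hgw hwle'
        omega
      obtain ⟨ψ, hψI, hψ⟩ := exists_word_of_mem_parabolic cs hvmem
      have hsimem : cs.simple i ∈ parabolic cs I :=
        leftInvSeq_mem_parabolic cs ψ hψI _
          (simple_mem_leftInvSeq_of_descent cs hdesc ψ hψ)
      have hgeq : g = (g * cs.simple i) * cs.simple i := by
        rw [mul_assoc, cs.simple_mul_simple_self, mul_one]
      rw [hgeq]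
      exact mul_mem hg'mem hsimem

lemma wle_antisymm {u v : W} (h1 : wle cs u v) (h2 : wle cs v u) : u = v := by
  unfold wle at h1 h2
  have hlu : cs.length (u⁻¹ * v) = 0 := by
    have : cs.length (v⁻¹ * u) = cs.length (u⁻¹ * v) := by
      rw [← cs.length_inv (v⁻¹ * u)]
      congr 1
      group
    omega
  have : u⁻¹ * v = 1 := cs.length_eq_zero_iff.mp hlu
  exact inv_injective (mul_eq_one_iff_eq_inv.mp this)

end Cocycle

/-- The restriction of `π_B` to `W_I` is the `(B ∩ W_I)`-projection. -/
theorem stmt_13 (cs : CoxeterSystem M W) (Bs : Set W) (hB : IsGarsideShadow cs Bs)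
    (I : Set A) (π π' : W → W) (hπ : IsProj cs Bs π)
    (hπ' : IsProjIn cs I (Bs ∩ (parabolic cs I : Set W)) π')
    (w : W) (hw : w ∈ parabolic cs I) :
    π w = π' w := by
  obtain ⟨hπB, hjoin⟩ := hπ w
  obtain ⟨hπ'B, hjoin'⟩ := hπ' w hw
  have hset : {g | g ∈ Bs ∧ wle cs g w} =
      {g | g ∈ Bs ∩ (parabolic cs I : Set W) ∧ wle cs g w} := by
    ext g
    constructor
    · rintro ⟨hgB, hgw⟩
      exact ⟨⟨hgB, prefix_mem_parabolic cs (cs.length g) g w rfl hw hgw⟩, hgw⟩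
    · rintro ⟨⟨hgB, _⟩, hgw⟩
      exact ⟨hgB, hgw⟩
  have h1 : wle cs (π w) (π' w) :=
    hjoin.2 (π' w) (fun x hx => hjoin'.1 x (hset ▸ hx))
  have h2 : wle cs (π' w) (π w) :=
    hjoin'.2 (π w) (fun x hx => hjoin.1 x (hset.symm ▸ hx))
  exact wle_antisymm cs h1 h2
end

section
/- Let X be a bounded subset of W (in the right weak order) and I ⊆ S. Then p_I(⋁X) = ⋁ p_I(X), where p_I : W → W_I sends w to the W_I-component of its decomposition w = w_I w^I. -/
open CoxeterSystem

variable {A W : Type*} [Group W] {M : CoxeterMatrix A}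

namespace Stmt15Aux

open scoped Classical
set_option linter.unusedSectionVars false

/-- `a * (b*a)^n = (a*b)^n * a` in any monoid. -/
lemma shift_pow {G : Type*} [Monoid G] (a b : G) : ∀ n : ℕ, a * (b*a)^n = (a*b)^n * a := by
  intro n
  induction n with
  | zero => simp
  | succ n ih =>
    calc a * (b*a)^(n+1) = (a * (b*a)^n) * (b*a) := by rw [pow_succ, mul_assoc]
      _ = ((a*b)^n * a) * (b * a) := by rw [ih]
      _ = (a*b)^n * (a*b) * a := by simp only [mul_assoc]
      _ = (a*b)^(n+1) * a := by rw [pow_succ]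

/-- Alternating word `[i, j, i, j, ...]` of length `n` (cons-based). -/
def altW (i j : A) : ℕ → List A
  | 0 => []
  | n+1 => i :: altW j i n

lemma altW_two_step (i j : A) (n : ℕ) : altW i j (n+2) = i :: j :: altW i j n := rfl

variable (cs : CoxeterSystem M W)

lemma altW_prod_even : ∀ (n : ℕ) (i j : A),
    cs.wordProd (altW i j (2*n)) = (cs.simple i * cs.simple j)^n := by
  intro n
  induction n with
  | zero => intro i j; simp [altW]
  | succ n ih =>
    intro i j
    have h2 : 2*(n+1) = (2*n)+2 := by ring
    rw [h2, altW_two_step, cs.wordProd_cons, cs.wordProd_cons, ih i j, pow_succ']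
    group

lemma altW_prod_odd (n : ℕ) (i j : A) :
    cs.wordProd (altW i j (2*n+1)) = (cs.simple i * cs.simple j)^n * cs.simple i := by
  have h : altW i j (2*n+1) = i :: altW j i (2*n) := rfl
  rw [h, cs.wordProd_cons, altW_prod_even, shift_pow]

/-- Conjugation flip: `s i * (s i s j)^p * s i = (s j s i)^p`. -/
lemma flip_pow (i j : A) (p : ℕ) :
    cs.simple i * (cs.simple i * cs.simple j)^p * cs.simple i
      = (cs.simple j * cs.simple i)^p := by
  have h1 : cs.simple i * (cs.simple i * cs.simple j) * (cs.simple i)⁻¹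
      = cs.simple j * cs.simple i := by
    rw [cs.inv_simple]
    simp only [← mul_assoc]
    rw [cs.simple_mul_simple_self, one_mul]
  calc cs.simple i * (cs.simple i * cs.simple j)^p * cs.simple i
      = cs.simple i * (cs.simple i * cs.simple j)^p * (cs.simple i)⁻¹ := by rw [cs.inv_simple]
    _ = (cs.simple i * (cs.simple i * cs.simple j) * (cs.simple i)⁻¹)^p := (conj_pow).symm
    _ = (cs.simple j * cs.simple i)^p := by rw [h1]

/-- Second flip: `s j * (s i s j)^p * s j = (s j s i)^p`. -/
lemma flip_pow' (i j : A) (p : ℕ) :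
    cs.simple j * (cs.simple i * cs.simple j)^p * cs.simple j
      = (cs.simple j * cs.simple i)^p := by
  have h1 : cs.simple j * (cs.simple i * cs.simple j) * (cs.simple j)⁻¹
      = cs.simple j * cs.simple i := by
    rw [cs.inv_simple]
    simp only [mul_assoc]
    rw [cs.simple_mul_simple_self, mul_one]
  calc cs.simple j * (cs.simple i * cs.simple j)^p * cs.simple j
      = cs.simple j * (cs.simple i * cs.simple j)^p * (cs.simple j)⁻¹ := by rw [cs.inv_simple]
    _ = (cs.simple j * (cs.simple i * cs.simple j) * (cs.simple j)⁻¹)^p := (conj_pow).symm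
    _ = (cs.simple j * cs.simple i)^p := by rw [h1]

lemma altW_length (i j : A) : ∀ n, (altW i j n).length = n := by
  intro n
  induction n generalizing i j with
  | zero => rfl
  | succ n ih => simpa [altW] using ih j i

/-- Closed form for the entries of the right inversion sequence of an alternating word. -/
lemma ris_altW_getD : ∀ (n : ℕ) (i j : A) (k : ℕ), k < n →
    (cs.rightInvSeq (altW i j n)).getD k 1 =
      if Even n then cs.simple j * (cs.simple i * cs.simple j)^(n-1-k)
      else (cs.simple i * cs.simple j)^(n-1-k) * cs.simple i := by
  intro n
  induction n with
  | zero => intro i j k hk; omega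
  | succ n ih =>
    intro i j k hk
    have hris : cs.rightInvSeq (altW i j (n+1))
        = ((cs.wordProd (altW j i n))⁻¹ * cs.simple i * cs.wordProd (altW j i n))
          :: cs.rightInvSeq (altW j i n) := rfl
    match k with
    | 0 =>
      rw [hris]
      simp only [List.getD_cons_zero]
      rcases Nat.even_or_odd n with he | ho
      · -- n even, n+1 odd
        obtain ⟨r, rfl⟩ := he
        have h2 : r + r = 2*r := by omega
        rw [h2, altW_prod_even]
        have hinv : ((cs.simple j * cs.simple i)^r)⁻¹ = (cs.simple i * cs.simple j)^r := by
          rw [← inv_pow, mul_inv_rev, cs.inv_simple, cs.inv_simple]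
        rw [hinv, if_neg (by simp [Nat.even_add_one, Nat.even_mul]),
          show 2*r+1-1-0 = 2*r by omega]
        calc (cs.simple i * cs.simple j)^r * cs.simple i * (cs.simple j * cs.simple i)^r
            = (cs.simple i * cs.simple j)^r * (cs.simple i * (cs.simple j * cs.simple i)^r) := by
              rw [mul_assoc]
          _ = (cs.simple i * cs.simple j)^r * ((cs.simple i * cs.simple j)^r * cs.simple i) := by
              rw [shift_pow]
          _ = (cs.simple i * cs.simple j)^(2*r) * cs.simple i := by
              rw [← mul_assoc, ← pow_add, two_mul]
      · -- n odd, n+1 even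
        obtain ⟨r, rfl⟩ := ho
        rw [altW_prod_odd, if_pos (by simp [Nat.even_add_one, Nat.even_mul]),
          show 2*r+1+1-1-0 = 2*r+1 by omega]
        have hinv : ((cs.simple j * cs.simple i)^r * cs.simple j)⁻¹
            = cs.simple j * (cs.simple i * cs.simple j)^r := by
          rw [mul_inv_rev, ← inv_pow, mul_inv_rev, cs.inv_simple, cs.inv_simple]
        rw [hinv, ← shift_pow (cs.simple j) (cs.simple i) r]
        calc cs.simple j * (cs.simple i * cs.simple j)^r * cs.simple i *
              (cs.simple j * (cs.simple i * cs.simple j)^r)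
            = cs.simple j * ((cs.simple i * cs.simple j)^r *
                ((cs.simple i * cs.simple j) * (cs.simple i * cs.simple j)^r)) := by
              simp only [mul_assoc]
          _ = cs.simple j * ((cs.simple i * cs.simple j)^r * (cs.simple i * cs.simple j)^(r+1)) := by
              rw [← pow_succ']
          _ = cs.simple j * (cs.simple i * cs.simple j)^(2*r+1) := by
              rw [← pow_add, show r+(r+1) = 2*r+1 by omega]
    | (k+1) =>
      rw [hris]
      simp only [List.getD_cons_succ]
      have hk' : k < n := by omega
      rw [ih j i k hk']
      have hexp : n+1-1-(k+1) = n-1-k := by omega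
      rcases Nat.even_or_odd n with he | ho
      · rw [if_pos he, if_neg (by simpa [Nat.even_add_one] using he), hexp]
        exact shift_pow (cs.simple i) (cs.simple j) _
      · rw [if_neg (by simpa using Nat.not_even_iff_odd.mpr ho),
          if_pos (by simp [Nat.even_add_one, Nat.not_even_iff_odd.mpr ho]), hexp]
        exact (shift_pow (cs.simple j) (cs.simple i) _).symm

/-- The sign-permutation map associated to a generator. -/
noncomputable def fperm (i : A) : W × ℤˣ → W × ℤˣ :=
  fun p => (cs.simple i * p.1 * cs.simple i, if p.1 = cs.simple i then -p.2 else p.2)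

lemma conj_simple_eq_iff (i : A) (t : W) :
    cs.simple i * t * cs.simple i = cs.simple i ↔ t = cs.simple i := by
  constructor
  · intro h
    have h' : cs.simple i * (t * cs.simple i) = cs.simple i * 1 := by
      rw [mul_one, ← mul_assoc]; exact h
    have h'' : t * cs.simple i = 1 := mul_left_cancel h'
    rw [eq_inv_of_mul_eq_one_left h'', cs.inv_simple]
  · rintro rfl
    rw [cs.simple_mul_simple_self, one_mul]

lemma conj_conj_simple (i : A) (t : W) :
    cs.simple i * (cs.simple i * t * cs.simple i) * cs.simple i = t := by
  simp only [← mul_assoc, cs.simple_mul_simple_self, one_mul]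
  rw [mul_assoc, cs.simple_mul_simple_self, mul_one]

lemma fperm_invol (i : A) : Function.Involutive (fperm cs i) := by
  rintro ⟨t, ε⟩
  simp only [fperm, Prod.mk.injEq]
  constructor
  · exact conj_conj_simple cs i t
  · by_cases h : t = cs.simple i
    · rw [if_pos ((conj_simple_eq_iff cs i t).mpr h), if_pos h, neg_neg]
    · rw [if_neg (fun hc => h ((conj_simple_eq_iff cs i t).mp hc)), if_neg h]

/-- The sign permutation as an element of the permutation group. -/
noncomputable def fpermE (i : A) : Equiv.Perm (W × ℤˣ) :=
  Function.Involutive.toPerm _ (fperm_invol cs i)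

lemma fpermE_apply (i : A) (p : W × ℤˣ) : fpermE cs i p = fperm cs i p := rfl

/-- The fundamental computation: applying the product of sign permutations of a word. -/
lemma prodmap_apply : ∀ (l : List A) (t : W) (ε : ℤˣ),
    ((l.map (fpermE cs)).prod) (t, ε) =
      (cs.wordProd l * t * (cs.wordProd l)⁻¹,
       ((cs.rightInvSeq l).map (fun r => if r = t then (-1 : ℤˣ) else 1)).prod * ε) := by
  intro l
  induction l with
  | nil =>
    intro t ε
    simp [cs.wordProd_nil]
  | cons i l ih =>
    intro t ε
    have hris : cs.rightInvSeq (i :: l)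
        = ((cs.wordProd l)⁻¹ * cs.simple i * cs.wordProd l) :: cs.rightInvSeq l := rfl
    rw [List.map_cons, List.prod_cons, Equiv.Perm.mul_apply, ih, fpermE_apply]
    simp only [fperm, hris, List.map_cons, List.prod_cons]
    have hfirst : cs.simple i * (cs.wordProd l * t * (cs.wordProd l)⁻¹) * cs.simple i
        = cs.wordProd (i :: l) * t * (cs.wordProd (i :: l))⁻¹ := by
      rw [cs.wordProd_cons, mul_inv_rev, cs.inv_simple]
      simp only [mul_assoc]
    have hcond : (cs.wordProd l * t * (cs.wordProd l)⁻¹ = cs.simple i)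
        ↔ ((cs.wordProd l)⁻¹ * cs.simple i * cs.wordProd l = t) := by
      constructor
      · intro h; rw [← h]; group
      · intro h; rw [← h]; group
    simp only [Prod.mk.injEq]
    refine ⟨hfirst, ?_⟩
    by_cases h : (cs.wordProd l)⁻¹ * cs.simple i * cs.wordProd l = t
    · rw [if_pos (hcond.mpr h), if_pos h]
      simp [neg_mul]
    · rw [if_neg (fun hc => h (hcond.mp hc)), if_neg h, one_mul]

/-- The braid relations hold for the sign permutations. -/
lemma braid : M.IsLiftable (fun i => fpermE cs i) := by
  intro i j
  have hlist : ∀ q : ℕ, (fpermE cs i * fpermE cs j)^q = ((altW i j (2*q)).map (fpermE cs)).prod := by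
    intro q
    induction q with
    | zero => simp [altW]
    | succ q ih =>
      rw [show 2*(q+1) = (2*q)+2 by ring, altW_two_step]
      simp only [List.map_cons, List.prod_cons]
      rw [pow_succ', ih, mul_assoc]
  rw [hlist (M i j)]
  apply Equiv.ext
  rintro ⟨t, ε⟩
  rw [prodmap_apply]
  have hpi : cs.wordProd (altW i j (2*(M i j))) = 1 := by
    rw [altW_prod_even, cs.simple_mul_simple_pow]
  set L := cs.rightInvSeq (altW i j (2*(M i j))) with hL
  have hlen : L.length = 2*(M i j) := by
    rw [hL, cs.length_rightInvSeq, altW_length]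
  have heq : L.take (M i j) = L.drop (M i j) := by
    apply List.ext_getElem
    · rw [List.length_take, List.length_drop, hlen]; omega
    · intro k h1 h2
      have hk : k < M i j := by
        rw [List.length_take, hlen] at h1; omega
      rw [List.getElem_take, List.getElem_drop]
      have e1 : L[k] = L.getD k 1 := (List.getD_eq_getElem L 1 (by omega : k < L.length)).symm
      have e2 : L[M i j + k] = L.getD (M i j + k) 1 :=
        (List.getD_eq_getElem L 1 (by omega : M i j + k < L.length)).symm
      rw [e1, e2, hL, ris_altW_getD cs _ i j k (by omega),
        ris_altW_getD cs _ i j (M i j + k) (by omega)]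
      rw [if_pos (by simp [Nat.even_mul]), if_pos (by simp [Nat.even_mul])]
      congr 1
      rw [show 2*(M i j)-1-k = (2*(M i j)-1-(M i j + k)) + M i j by omega, pow_add,
        cs.simple_mul_simple_pow, mul_one]
  have hsign : (L.map (fun r => if r = t then (-1:ℤˣ) else 1)).prod = 1 := by
    conv_lhs => rw [← List.take_append_drop (M i j) L]
    rw [List.map_append, List.prod_append, heq, Int.units_mul_self]
  rw [hpi, hsign]
  simp

/-- The sign representation of the Coxeter group. -/
noncomputable def mu : W →* Equiv.Perm (W × ℤˣ) :=
  cs.lift ⟨fun i => fpermE cs i, braid cs⟩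

lemma mu_simple (i : A) : mu cs (cs.simple i) = fpermE cs i :=
  cs.lift_apply_simple (braid cs) i

lemma mu_wordProd (l : List A) : mu cs (cs.wordProd l) = (l.map (fpermE cs)).prod := by
  induction l with
  | nil => rw [cs.wordProd_nil, List.map_nil, List.prod_nil, map_one]
  | cons i l ih => rw [cs.wordProd_cons, List.map_cons, List.prod_cons, map_mul, mu_simple, ih]

/-- The sign cocycle. -/
noncomputable def eta (w t : W) : ℤˣ := ((mu cs w) (t, 1)).2

lemma eta_wordProd (l : List A) (t : W) :
    eta cs (cs.wordProd l) t
      = ((cs.rightInvSeq l).map (fun r => if r = t then (-1 : ℤˣ) else 1)).prod := by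
  rw [eta, mu_wordProd, prodmap_apply, mul_one]

lemma mu_apply (w t : W) (ε : ℤˣ) : mu cs w (t, ε) = (w * t * w⁻¹, eta cs w t * ε) := by
  obtain ⟨l, _, rfl⟩ := cs.exists_reduced_word' w
  rw [mu_wordProd, prodmap_apply, eta_wordProd]

lemma eta_mul (u v t : W) : eta cs (u * v) t = eta cs u (v * t * v⁻¹) * eta cs v t := by
  have h : mu cs (u * v) (t, 1) = mu cs u (mu cs v (t, 1)) := by rw [map_mul]; rfl
  rw [mu_apply, mu_apply, mu_apply] at h
  have h2 := congrArg Prod.snd h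
  simp only [mul_one] at h2
  exact h2

lemma eta_simple (i : A) (t : W) :
    eta cs (cs.simple i) t = if t = cs.simple i then -1 else 1 := by
  rw [eta, mu_simple, fpermE_apply]
  simp [fperm]

lemma eta_eq_one_or (w t : W) : eta cs w t = 1 ∨ eta cs w t = -1 :=
  Int.units_eq_one_or _

lemma prod_sign_of_not_mem {t : W} : ∀ {L : List W}, t ∉ L →
    (L.map (fun r => if r = t then (-1:ℤˣ) else 1)).prod = 1 := by
  intro L
  induction L with
  | nil => intro _; rfl
  | cons a L ih =>
    intro h
    rw [List.mem_cons, not_or] at h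
    rw [List.map_cons, List.prod_cons, if_neg (fun hc => h.1 hc.symm), one_mul, ih h.2]

lemma mem_ris_of_eta {l : List A} {t : W} (h : eta cs (cs.wordProd l) t = -1) :
    t ∈ cs.rightInvSeq l := by
  by_contra hmem
  rw [eta_wordProd, prod_sign_of_not_mem hmem] at h
  exact absurd h (by decide)

/-- If `η w t = -1` then `t` is a right inversion of `w`. -/
lemma rightInv_of_eta {w t : W} (h : eta cs w t = -1) :
    cs.length (w * t) < cs.length w := by
  obtain ⟨l, hred, rfl⟩ := cs.exists_reduced_word' w
  have := cs.isRightInversion_of_mem_rightInvSeq hred (mem_ris_of_eta cs h)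
  exact this.2

lemma eta_self_aux : ∀ (l : List A) (i : A),
    eta cs (cs.wordProd l * cs.simple i * (cs.wordProd l)⁻¹)
      (cs.wordProd l * cs.simple i * (cs.wordProd l)⁻¹) = -1 := by
  intro l
  induction l with
  | nil =>
    intro i
    simp only [cs.wordProd_nil, one_mul, inv_one, mul_one]
    rw [eta_simple, if_pos rfl]
  | cons j l ih =>
    intro i
    set t' := cs.wordProd l * cs.simple i * (cs.wordProd l)⁻¹ with ht'
    have hw : cs.wordProd (j :: l) * cs.simple i * (cs.wordProd (j :: l))⁻¹
        = cs.simple j * t' * cs.simple j := by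
      rw [cs.wordProd_cons, mul_inv_rev, cs.inv_simple, ht']
      simp only [mul_assoc]
    rw [hw]
    have e1 : eta cs (cs.simple j * t' * cs.simple j) (cs.simple j * t' * cs.simple j)
        = eta cs (cs.simple j * t') ((cs.simple j) * (cs.simple j * t' * cs.simple j) * (cs.simple j)⁻¹)
          * eta cs (cs.simple j) (cs.simple j * t' * cs.simple j) := by
      rw [← eta_mul]
    have e2 : (cs.simple j) * (cs.simple j * t' * cs.simple j) * (cs.simple j)⁻¹ = t' := by
      rw [cs.inv_simple]; exact conj_conj_simple cs j t'
    have e3 : eta cs (cs.simple j * t') t'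
        = eta cs (cs.simple j) (t' * t' * t'⁻¹) * eta cs t' t' := by
      rw [← eta_mul]
    have e4 : t' * t' * t'⁻¹ = t' := by group
    have e5 : eta cs t' t' = -1 := ih i
    have hiff : (cs.simple j * t' * cs.simple j = cs.simple j) ↔ (t' = cs.simple j) :=
      conj_simple_eq_iff cs j t'
    rw [e1, e2, e3, e4, e5, eta_simple, eta_simple]
    by_cases hc : t' = cs.simple j
    · rw [if_pos hc, if_pos (hiff.mpr hc)]; decide
    · rw [if_neg hc, if_neg (fun h => hc (hiff.mp h))]; decide

lemma eta_self {t : W} (ht : cs.IsReflection t) : eta cs t t = -1 := by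
  obtain ⟨w, i, rfl⟩ := ht
  obtain ⟨l, _, rfl⟩ := cs.exists_reduced_word' w
  exact eta_self_aux cs l i

/-- If `t` is a reflection and a right inversion of `w` then `η w t = -1`. -/
lemma eta_of_rightInv {w t : W} (ht : cs.IsReflection t) (h : cs.length (w * t) < cs.length w) :
    eta cs w t = -1 := by
  have hsplit : eta cs w t = eta cs (w * t) (t * t * t⁻¹) * eta cs t t := by
    rw [← eta_mul, mul_assoc, ht.mul_self, mul_one]
  have e4 : t * t * t⁻¹ = t := by group
  rw [e4, eta_self cs ht] at hsplit
  have h2 : eta cs (w * t) t = 1 := by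
    rcases eta_eq_one_or cs (w * t) t with h' | h'
    · exact h'
    · exfalso
      have := rightInv_of_eta cs h'
      rw [mul_assoc, ht.mul_self, mul_one] at this
      omega
  rw [h2] at hsplit
  rw [hsplit]
  decide

/-- `t` is a left inversion of `w`. -/
def NL (w t : W) : Prop := cs.length (t * w) < cs.length w

lemma nl_iff_eta {w t : W} (ht : cs.IsReflection t) :
    NL cs w t ↔ eta cs w⁻¹ t = -1 := by
  have hlen : cs.length (w⁻¹ * t) = cs.length (t * w) := by
    rw [← cs.length_inv, mul_inv_rev, inv_inv, ht.inv]
  constructor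
  · intro h
    apply eta_of_rightInv cs ht
    rw [hlen, cs.length_inv]
    exact h
  · intro h
    have := rightInv_of_eta cs h
    rw [hlen, cs.length_inv] at this
    exact this

/-! ### Basic facts about the weak order -/

lemma wle_one (w : W) : wle cs 1 w := by
  simp [wle]

lemma wle_rfl (w : W) : wle cs w w := by
  simp [wle]

lemma wle_def {u v : W} (h : wle cs u v) :
    cs.length u + cs.length (u⁻¹ * v) = cs.length v := h

lemma wle_trans {u v w : W} (h1 : wle cs u v) (h2 : wle cs v w) : wle cs u w := by
  unfold wle at *
  have t1 : cs.length (u⁻¹ * w) ≤ cs.length (u⁻¹ * v) + cs.length (v⁻¹ * w) := by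
    have := cs.length_mul_le (u⁻¹ * v) (v⁻¹ * w)
    rw [show u⁻¹ * v * (v⁻¹ * w) = u⁻¹ * w by group] at this
    exact this
  have t2 : cs.length w ≤ cs.length u + cs.length (u⁻¹ * w) := by
    have := cs.length_mul_le u (u⁻¹ * w)
    rw [show u * (u⁻¹ * w) = w by group] at this
    exact this
  omega

lemma wle_length {u v : W} (h : wle cs u v) : cs.length u ≤ cs.length v := by
  unfold wle at h; omega

lemma wle_eq {u v : W} (h : wle cs u v) (hl : cs.length v ≤ cs.length u) : u = v := by
  unfold wle at h
  have h0 : cs.length (u⁻¹ * v) = 0 := by omega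
  exact inv_mul_eq_one.mp (cs.length_eq_zero_iff.mp h0)

lemma nl_mono {u v t : W} (h : wle cs u v) (hn : NL cs u t) : NL cs v t := by
  unfold wle at h; unfold NL at *
  have t1 : cs.length (t * v) ≤ cs.length (t * u) + cs.length (u⁻¹ * v) := by
    have := cs.length_mul_le (t * u) (u⁻¹ * v)
    rw [show t * u * (u⁻¹ * v) = t * v by group] at this
    exact this
  omega

lemma simple_conj_refl (i : A) (t : W) (ht : cs.IsReflection t) :
    cs.IsReflection (cs.simple i * t * cs.simple i) := by
  have := ht.conj (cs.simple i)
  rwa [cs.inv_simple] at this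

lemma nl_simple_conj {z t : W} (i : A) (ht : cs.IsReflection t) (htne : t ≠ cs.simple i) :
    NL cs (cs.simple i * z) t ↔ NL cs z (cs.simple i * t * cs.simple i) := by
  rw [nl_iff_eta cs ht, nl_iff_eta cs (simple_conj_refl cs i t ht)]
  have hsplit : (cs.simple i * z)⁻¹ = z⁻¹ * cs.simple i := by
    rw [mul_inv_rev, cs.inv_simple]
  rw [hsplit, eta_mul, eta_simple, if_neg htne, mul_one, cs.inv_simple]

/-- E3 converse: inversion set containment implies weak order. -/
lemma wle_of_nl_imp : ∀ (n : ℕ) (u v : W), cs.length u ≤ n →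
    (∀ t, cs.IsReflection t → NL cs u t → NL cs v t) → wle cs u v := by
  intro n
  induction n with
  | zero =>
    intro u v hu _
    have : u = 1 := cs.length_eq_zero_iff.mp (by omega)
    subst this
    exact wle_one cs v
  | succ n ih =>
    intro u v hu himp
    by_cases h1 : u = 1
    · subst h1; exact wle_one cs v
    · obtain ⟨i, hi⟩ := cs.exists_leftDescent_of_ne_one h1
      have hnu : NL cs u (cs.simple i) := hi
      have hnv : NL cs v (cs.simple i) := himp _ (cs.isReflection_simple i) hnu
      have hu' : cs.length (cs.simple i * u) + 1 = cs.length u := cs.isLeftDescent_iff.mp hi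
      have hv' : cs.length (cs.simple i * v) + 1 = cs.length v := cs.isLeftDescent_iff.mp hnv
      have htrans : ∀ t, cs.IsReflection t → NL cs (cs.simple i * u) t →
          NL cs (cs.simple i * v) t := by
        intro t ht hnt
        have htne : t ≠ cs.simple i := by
          rintro rfl
          have : cs.length (cs.simple i * (cs.simple i * u)) < cs.length (cs.simple i * u) := hnt
          rw [cs.simple_mul_simple_cancel_left] at this
          omega
        rw [nl_simple_conj cs i ht htne] at hnt
        rw [nl_simple_conj cs i ht htne]
        exact himp _ (simple_conj_refl cs i t ht) hnt
      have hwle' : wle cs (cs.simple i * u) (cs.simple i * v) := by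
        apply ih _ _ (by omega) htrans
      unfold wle at hwle' ⊢
      rw [show (cs.simple i * u)⁻¹ * (cs.simple i * v) = u⁻¹ * v by group] at hwle'
      omega

/-- The coatom lifting lemma. -/
lemma Jdagger {x u t : W} (hxu : wle cs x u) (ht : cs.IsReflection t)
    (hco : cs.length (t * u) + 1 = cs.length u) (hnx : ¬ NL cs x t) :
    wle cs x (t * u) := by
  have hnlu : NL cs u t := by unfold NL; omega
  have h1 : eta cs u⁻¹ t = -1 := (nl_iff_eta cs ht).mp hnlu
  have hsplit : u⁻¹ = (x⁻¹ * u)⁻¹ * x⁻¹ := by group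
  rw [hsplit, eta_mul] at h1
  have hx1 : eta cs x⁻¹ t = 1 := by
    rcases eta_eq_one_or cs x⁻¹ t with h | h
    · exact h
    · exact absurd ((nl_iff_eta cs ht).mpr h) hnx
  rw [hx1, mul_one, inv_inv] at h1
  set d := x⁻¹ * u with hd
  set e := x⁻¹ * t * x with he
  have he_refl : cs.IsReflection e := by
    have := ht.conj x⁻¹
    rwa [inv_inv] at this
  have hlen1 : cs.length (d⁻¹ * e) < cs.length d⁻¹ := rightInv_of_eta cs h1
  have hlen2 : cs.length (e * d) < cs.length d := by
    have hh : cs.length (d⁻¹ * e) = cs.length (e * d) := by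
      rw [← cs.length_inv (d⁻¹ * e), mul_inv_rev, inv_inv, he_refl.inv]
    rw [← hh, ← cs.length_inv d]
    exact hlen1
  have htri : cs.length (t * u) ≤ cs.length x + cs.length (e * d) := by
    have halg : t * u = x * (e * d) := by rw [he, hd]; group
    rw [halg]
    exact cs.length_mul_le x (e * d)
  have hxu' : cs.length x + cs.length d = cs.length u := hxu
  show cs.length x + cs.length (x⁻¹ * (t * u)) = cs.length (t * u)
  have e2 : x⁻¹ * (t * u) = e * d := by rw [he, hd]; group
  rw [e2]
  omega

/-! ### Parabolic subgroup theory -/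

variable {I : Set A}

lemma simple_mem_parab {j : A} (hj : j ∈ I) : cs.simple j ∈ parabolic cs I :=
  Subgroup.subset_closure ⟨j, hj, rfl⟩

lemma wordProd_mem_parab {l : List A} (hl : ∀ a ∈ l, a ∈ I) :
    cs.wordProd l ∈ parabolic cs I := by
  induction l with
  | nil => rw [cs.wordProd_nil]; exact one_mem _
  | cons i l ih =>
    rw [cs.wordProd_cons]
    exact mul_mem (simple_mem_parab cs (hl i List.mem_cons_self))
      (ih (fun a ha => hl a (List.mem_cons_of_mem i ha)))

lemma parab_word {w : W} (hw : w ∈ parabolic cs I) :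
    ∃ l : List A, (∀ a ∈ l, a ∈ I) ∧ w = cs.wordProd l := by
  induction hw using Subgroup.closure_induction with
  | mem x hx =>
    obtain ⟨a, haI, rfl⟩ := hx
    exact ⟨[a], by simpa using haI, (cs.wordProd_singleton a).symm⟩
  | one => exact ⟨[], by simp, by rw [cs.wordProd_nil]⟩
  | mul x y _ _ hx hy =>
    obtain ⟨l1, h1, rfl⟩ := hx
    obtain ⟨l2, h2, rfl⟩ := hy
    refine ⟨l1 ++ l2, ?_, (cs.wordProd_append l1 l2).symm⟩
    intro a ha
    rcases List.mem_append.mp ha with h | h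
    · exact h1 a h
    · exact h2 a h
  | inv x _ hx =>
    obtain ⟨l, h1, rfl⟩ := hx
    exact ⟨l.reverse, fun a ha => h1 a (List.mem_reverse.mp ha), (cs.wordProd_reverse l).symm⟩

lemma shorten_word : ∀ (n : ℕ) (l : List A), l.length ≤ n → (∀ a ∈ l, a ∈ I) →
    ∃ τ : List A, (∀ a ∈ τ, a ∈ I) ∧ cs.IsReduced τ ∧ cs.wordProd τ = cs.wordProd l := by
  intro n
  induction n with
  | zero =>
    intro l hl _
    have : l = [] := List.length_eq_zero_iff.mp (by omega)
    subst this
    exact ⟨[], by simp, by simp [CoxeterSystem.IsReduced], rfl⟩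
  | succ n ih =>
    intro l hlen hmem
    match l with
    | [] => exact ⟨[], by simp, by simp [CoxeterSystem.IsReduced], rfl⟩
    | i :: l' =>
      obtain ⟨τ, hτI, hτred, hτprod⟩ := ih l' (by simp at hlen; omega)
        (fun a ha => hmem a (List.mem_cons_of_mem _ ha))
      rcases cs.length_simple_mul (cs.wordProd τ) i with h | h
      · refine ⟨i :: τ, ?_, ?_, ?_⟩
        · intro a ha
          rcases List.mem_cons.mp ha with rfl | ha
          · exact hmem _ List.mem_cons_self
          · exact hτI a ha
        · show cs.length (cs.wordProd (i :: τ)) = (i :: τ).length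
          rw [cs.wordProd_cons, h, hτred]
          simp
        · rw [cs.wordProd_cons, cs.wordProd_cons, hτprod]
      · -- descent case: shorten
        have heta : eta cs (cs.wordProd τ.reverse) (cs.simple i) = -1 := by
          apply eta_of_rightInv cs (cs.isReflection_simple i)
          have e1 : cs.length ((cs.wordProd τ)⁻¹ * cs.simple i)
              = cs.length (cs.simple i * cs.wordProd τ) := by
            rw [← cs.length_inv, mul_inv_rev, inv_inv, cs.inv_simple]
          rw [cs.wordProd_reverse, e1, cs.length_inv]
          omega
        have hmemr : cs.simple i ∈ cs.rightInvSeq τ.reverse := mem_ris_of_eta cs heta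
        obtain ⟨k, hk, hkeq⟩ := List.mem_iff_getElem.mp hmemr
        have hkey : cs.wordProd τ.reverse * cs.simple i
            = cs.wordProd (τ.reverse.eraseIdx k) := by
          have h2 := cs.wordProd_mul_getD_rightInvSeq τ.reverse k
          rw [List.getD_eq_getElem _ 1 hk, hkeq] at h2
          exact h2
        set ρ := (τ.reverse.eraseIdx k).reverse with hρ
        have hk' : k < τ.reverse.length := by
          rw [cs.length_rightInvSeq] at hk
          exact hk
        have hρI : ∀ a ∈ ρ, a ∈ I := by
          intro a ha
          rw [hρ, List.mem_reverse] at ha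
          have := (List.eraseIdx_sublist τ.reverse k).mem ha
          rw [List.mem_reverse] at this
          exact hτI a this
        have hρlen : ρ.length ≤ n := by
          have e2 := List.length_eraseIdx_add_one hk'
          have e3 : cs.length (cs.wordProd τ) ≤ l'.length := by
            rw [hτprod]
            exact cs.length_wordProd_le l'
          rw [hρ, List.length_reverse]
          rw [hτred] at *
          simp at hlen e2 ⊢
          omega
        have hρprod : cs.wordProd ρ = cs.wordProd (i :: l') := by
          rw [hρ, cs.wordProd_reverse, ← hkey, mul_inv_rev, cs.wordProd_reverse, inv_inv,
            cs.inv_simple, cs.wordProd_cons, hτprod]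
        obtain ⟨σ, hσI, hσred, hσprod⟩ := ih ρ hρlen hρI
        exact ⟨σ, hσI, hσred, by rw [hσprod, hρprod]⟩

lemma parab_reduced_word {w : W} (hw : w ∈ parabolic cs I) :
    ∃ l : List A, (∀ a ∈ l, a ∈ I) ∧ cs.IsReduced l ∧ w = cs.wordProd l := by
  obtain ⟨l, hlI, rfl⟩ := parab_word cs hw
  obtain ⟨τ, h1, h2, h3⟩ := shorten_word cs l.length l le_rfl hlI
  exact ⟨τ, h1, h2, h3.symm⟩

lemma exists_I_descent {w : W} (hw : w ∈ parabolic cs I) (hne : w ≠ 1) :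
    ∃ j ∈ I, NL cs w (cs.simple j) := by
  obtain ⟨l, hlI, hred, rfl⟩ := parab_reduced_word cs hw
  match l with
  | [] => exact absurd (cs.wordProd_nil) hne
  | a :: l' =>
    refine ⟨a, hlI a List.mem_cons_self, ?_⟩
    unfold NL
    have e1 : cs.simple a * cs.wordProd (a :: l') = cs.wordProd l' := by
      rw [cs.wordProd_cons, cs.simple_mul_simple_cancel_left]
    rw [e1, hred]
    have := cs.length_wordProd_le l'
    simp
    omega

lemma ris_mem_parab : ∀ {l : List A}, (∀ a ∈ l, a ∈ I) → ∀ {t : W}, t ∈ cs.rightInvSeq l →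
    t ∈ parabolic cs I := by
  intro l
  induction l with
  | nil => intro _ t ht; simp [CoxeterSystem.rightInvSeq] at ht
  | cons i l ih =>
    intro hl t ht
    have hris : cs.rightInvSeq (i :: l)
        = ((cs.wordProd l)⁻¹ * cs.simple i * cs.wordProd l) :: cs.rightInvSeq l := rfl
    rw [hris, List.mem_cons] at ht
    have htail : ∀ a ∈ l, a ∈ I := fun a ha => hl a (List.mem_cons_of_mem i ha)
    rcases ht with rfl | ht
    · exact mul_mem (mul_mem (inv_mem (wordProd_mem_parab cs htail))
        (simple_mem_parab cs (hl i List.mem_cons_self))) (wordProd_mem_parab cs htail)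
    · exact ih htail ht

lemma nl_mem_parab {w t : W} (hw : w ∈ parabolic cs I) (ht : cs.IsReflection t)
    (hnl : NL cs w t) : t ∈ parabolic cs I := by
  obtain ⟨l, hlI, hred, rfl⟩ := parab_reduced_word cs hw
  have heta : eta cs (cs.wordProd l.reverse) t = -1 := by
    rw [cs.wordProd_reverse]
    exact (nl_iff_eta cs ht).mp hnl
  exact ris_mem_parab cs (fun a ha => hlI a (List.mem_reverse.mp ha)) (mem_ris_of_eta cs heta)

lemma eta_parab {b t : W} (hb : b ∈ parabolic cs I) (h : eta cs b t = -1) :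
    t ∈ parabolic cs I := by
  obtain ⟨l, hlI, hred, rfl⟩ := parab_reduced_word cs hb
  exact ris_mem_parab cs hlI (mem_ris_of_eta cs h)

lemma wle_cancel {c d : W} (i : A) (hc : NL cs c (cs.simple i)) (hd : NL cs d (cs.simple i))
    (h : wle cs c d) : wle cs (cs.simple i * c) (cs.simple i * d) := by
  have hc' : cs.length (cs.simple i * c) + 1 = cs.length c := cs.isLeftDescent_iff.mp hc
  have hd' : cs.length (cs.simple i * d) + 1 = cs.length d := cs.isLeftDescent_iff.mp hd
  unfold wle at h ⊢
  rw [show (cs.simple i * c)⁻¹ * (cs.simple i * d) = c⁻¹ * d by group]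
  omega

lemma wle_parab_mem : ∀ (n : ℕ) (c d : W), cs.length c ≤ n → d ∈ parabolic cs I →
    wle cs c d → c ∈ parabolic cs I := by
  intro n
  induction n with
  | zero =>
    intro c d hc _ _
    have : c = 1 := cs.length_eq_zero_iff.mp (by omega)
    subst this
    exact one_mem _
  | succ n ih =>
    intro c d hc hd hwle
    by_cases h1 : c = 1
    · subst h1; exact one_mem _
    · obtain ⟨m, hm⟩ := cs.exists_leftDescent_of_ne_one h1
      have hnc : NL cs c (cs.simple m) := hm
      have hnd : NL cs d (cs.simple m) := nl_mono cs hwle hnc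
      have hsm : cs.simple m ∈ parabolic cs I :=
        nl_mem_parab cs hd (cs.isReflection_simple m) hnd
      have hlen : cs.length (cs.simple m * c) + 1 = cs.length c := cs.isLeftDescent_iff.mp hm
      have hc' : cs.simple m * c ∈ parabolic cs I :=
        ih (cs.simple m * c) (cs.simple m * d) (by omega) (mul_mem hsm hd)
          (wle_cancel cs m hnc hnd hwle)
      have : c = cs.simple m * (cs.simple m * c) := by rw [cs.simple_mul_simple_cancel_left]
      rw [this]
      exact mul_mem hsm hc'

/-- `y` has no left descents in `I`. -/
def XI (I : Set A) (y : W) : Prop := ∀ j ∈ I, ¬ NL cs y (cs.simple j)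

/-- Lemma (c): an element of `X_I` has no left inversion in `W_I`. -/
lemma xI_no_parab_inv : ∀ (n : ℕ) (y : W), cs.length y ≤ n → XI cs I y →
    ∀ t, t ∈ parabolic cs I → cs.IsReflection t → ¬ NL cs y t := by
  intro n
  induction n with
  | zero =>
    intro y hy _ t _ _ hnl
    have : y = 1 := cs.length_eq_zero_iff.mp (by omega)
    subst this
    unfold NL at hnl
    simp at hnl
  | succ n ih =>
    intro y hy hXI t htP htrefl hnl
    by_cases hy1 : y = 1
    · subst hy1; unfold NL at hnl; simp at hnl
    · obtain ⟨k, hk⟩ := cs.exists_rightDescent_of_ne_one hy1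
      set y' := y * cs.simple k with hy'
      have hylen : cs.length y' + 1 = cs.length y := cs.isRightDescent_iff.mp hk
      have hXI' : XI cs I y' := by
        intro j hj hnl'
        apply hXI j hj
        unfold NL at hnl' ⊢
        have t1 : cs.length (cs.simple j * y) ≤ cs.length (cs.simple j * y') + 1 := by
          have h2 := cs.length_mul_le (cs.simple j * y') (cs.simple k)
          rw [show cs.simple j * y' * cs.simple k = cs.simple j * y by
            rw [hy', mul_assoc, mul_assoc, cs.simple_mul_simple_self, mul_one]] at h2
          rw [cs.length_simple] at h2
          exact h2
        omega
      have heta : eta cs y⁻¹ t = -1 := (nl_iff_eta cs htrefl).mp hnl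
      have hysplit : y⁻¹ = cs.simple k * y'⁻¹ := by rw [hy']; group
      rw [hysplit, eta_mul, inv_inv, eta_simple] at heta
      by_cases hcase : y'⁻¹ * t * y' = cs.simple k
      · have htyy : t * y = y' := by
          have h3 : t = y' * cs.simple k * y'⁻¹ := by rw [← hcase]; group
          rw [h3, hy']
          group
        have htne : t ≠ 1 := by
          intro h1
          rw [h1] at hnl
          unfold NL at hnl
          rw [one_mul] at hnl
          omega
        obtain ⟨j, hjI, hjd⟩ := exists_I_descent cs htP htne
        set r := t * cs.simple j * t with hr
        have hrrefl : cs.IsReflection r := by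
          have := (cs.isReflection_simple j).conj t
          rwa [htrefl.inv] at this
        have hrP : r ∈ parabolic cs I :=
          mul_mem (mul_mem htP (simple_mem_parab cs hjI)) htP
        have hy's2 : y'⁻¹ = y⁻¹ * t := by
          rw [← htyy, mul_inv_rev, htrefl.inv]
        have hconj : t * r * t⁻¹ = cs.simple j := by
          rw [hr, htrefl.inv]
          calc t * (t * cs.simple j * t) * t
              = (t * t) * cs.simple j * (t * t) := by simp only [mul_assoc]
            _ = cs.simple j := by rw [htrefl.mul_self, one_mul, mul_one]
        have h1 : eta cs y⁻¹ (cs.simple j) = 1 := by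
          rcases eta_eq_one_or cs y⁻¹ (cs.simple j) with h' | h'
          · exact h'
          · exact absurd ((nl_iff_eta cs (cs.isReflection_simple j)).mpr h') (hXI j hjI)
        have h2 : eta cs t r = -1 := by
          apply eta_of_rightInv cs hrrefl
          have e4 : t * r = cs.simple j * t := by
            rw [hr, ← mul_assoc, ← mul_assoc, htrefl.mul_self, one_mul]
          rw [e4]
          exact hjd
        have heta2 : eta cs y'⁻¹ r = -1 := by
          rw [hy's2, eta_mul, hconj, h1, h2, one_mul]
        exact ih y' (by omega) hXI' r hrP hrrefl ((nl_iff_eta cs hrrefl).mpr heta2)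
      · rw [if_neg hcase, one_mul] at heta
        exact ih y' (by omega) hXI' t htP htrefl ((nl_iff_eta cs htrefl).mpr heta)

lemma xI_no {y t : W} (hXI : XI cs I y) (htP : t ∈ parabolic cs I)
    (htrefl : cs.IsReflection t) : ¬ NL cs y t :=
  xI_no_parab_inv cs (cs.length y) y le_rfl hXI t htP htrefl

/-- Lemma (b): lengths add in the parabolic decomposition. -/
lemma parab_XI_add : ∀ (n : ℕ) (y : W), cs.length y ≤ n → XI cs I y →
    ∀ b ∈ parabolic cs I, cs.length (b * y) = cs.length b + cs.length y := by
  intro n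
  induction n with
  | zero =>
    intro y hy _ b _
    have : y = 1 := cs.length_eq_zero_iff.mp (by omega)
    subst this
    simp
  | succ n ih =>
    intro y hy hXI b hbP
    by_cases hy1 : y = 1
    · subst hy1; simp
    · obtain ⟨k, hk⟩ := cs.exists_rightDescent_of_ne_one hy1
      set y' := y * cs.simple k with hy'
      have hylen : cs.length y' + 1 = cs.length y := cs.isRightDescent_iff.mp hk
      have hXI' : XI cs I y' := by
        intro j hj hnl'
        apply hXI j hj
        unfold NL at hnl' ⊢
        have t1 : cs.length (cs.simple j * y) ≤ cs.length (cs.simple j * y') + 1 := by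
          have h2 := cs.length_mul_le (cs.simple j * y') (cs.simple k)
          rw [show cs.simple j * y' * cs.simple k = cs.simple j * y by
            rw [hy', mul_assoc, mul_assoc, cs.simple_mul_simple_self, mul_one]] at h2
          rw [cs.length_simple] at h2
          exact h2
        omega
      have hadd' : cs.length (b * y') = cs.length b + cs.length y' :=
        ih y' (by omega) hXI' b hbP
      have halg : b * y = (b * y') * cs.simple k := by
        rw [hy', mul_assoc, mul_assoc, cs.simple_mul_simple_self, mul_one]
      rcases cs.length_mul_simple (b * y') k with h | h
      · rw [halg, h, hadd']
        omega
      · exfalso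
        have heta : eta cs (b * y') (cs.simple k) = -1 := by
          apply eta_of_rightInv cs (cs.isReflection_simple k)
          omega
        rw [eta_mul] at heta
        have h1 : eta cs y' (cs.simple k) = 1 := by
          rcases eta_eq_one_or cs y' (cs.simple k) with h' | h'
          · exact h'
          · exfalso
            have h2 := rightInv_of_eta cs h'
            rw [show y' * cs.simple k = y by
              rw [hy', mul_assoc, cs.simple_mul_simple_self, mul_one]] at h2
            omega
        rw [h1, mul_one] at heta
        set τ := y' * cs.simple k * y'⁻¹ with hτ
        have hτrefl : cs.IsReflection τ := (cs.isReflection_simple k).conj y'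
        have hτP : τ ∈ parabolic cs I := eta_parab cs hbP heta
        have hnly : NL cs y τ := by
          unfold NL
          rw [show τ * y = y' by rw [hτ, hy']; group]
          omega
        exact xI_no cs hXI hτP hτrefl hnly

lemma parab_XI_add' {b y : W} (hb : b ∈ parabolic cs I) (hy : XI cs I y) :
    cs.length (b * y) = cs.length b + cs.length y :=
  parab_XI_add cs (cs.length y) y le_rfl hy b hb

/-- Uniqueness of the parabolic decomposition. -/
lemma parab_decomp_unique {b₁ y₁ b₂ y₂ : W} (hb₁ : b₁ ∈ parabolic cs I) (hy₁ : XI cs I y₁)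
    (hb₂ : b₂ ∈ parabolic cs I) (hy₂ : XI cs I y₂) (heq : b₁ * y₁ = b₂ * y₂) : b₁ = b₂ := by
  set d := b₂⁻¹ * b₁ with hd
  have hdP : d ∈ parabolic cs I := mul_mem (inv_mem hb₂) hb₁
  have h1 : y₂ = d * y₁ := by
    rw [hd]
    have : b₂⁻¹ * (b₁ * y₁) = b₂⁻¹ * (b₂ * y₂) := by rw [heq]
    rw [inv_mul_cancel_left] at this
    rw [← this]
    group
  have l1 : cs.length y₂ = cs.length d + cs.length y₁ := by
    rw [h1]; exact parab_XI_add' cs hdP hy₁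
  have h2 : y₁ = d⁻¹ * y₂ := by rw [h1]; group
  have l2 : cs.length y₁ = cs.length d + cs.length y₂ := by
    rw [h2, parab_XI_add' cs (inv_mem hdP) hy₂, cs.length_inv]
  have l3 : cs.length d = 0 := by omega
  have : d = 1 := cs.length_eq_zero_iff.mp l3
  rw [hd] at this
  exact (inv_mul_eq_one.mp this).symm

/-! ### Properties of the parabolic projection -/

variable (p : W → W)

lemma hp_mem (hp : IsParabolicProj cs I p) (w : W) : p w ∈ parabolic cs I := (hp w).1

lemma hp_XI (hp : IsParabolicProj cs I p) (w : W) : XI cs I ((p w)⁻¹ * w) := by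
  intro j hj hnl
  have := (hp w).2 j hj
  unfold NL at hnl
  omega

lemma hp_wle (hp : IsParabolicProj cs I p) (w : W) : wle cs (p w) w := by
  show cs.length (p w) + cs.length ((p w)⁻¹ * w) = cs.length w
  have h1 := parab_XI_add' cs (hp_mem cs p hp w) (hp_XI cs p hp w)
  rw [mul_inv_cancel_left] at h1
  omega

lemma nl_p (hp : IsParabolicProj cs I p) {x t : W} (hnl : NL cs x t)
    (htP : t ∈ parabolic cs I) (htrefl : cs.IsReflection t) : NL cs (p x) t := by
  have heta : eta cs x⁻¹ t = -1 := (nl_iff_eta cs htrefl).mp hnl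
  have hsplit : x⁻¹ = ((p x)⁻¹ * x)⁻¹ * (p x)⁻¹ := by group
  rw [hsplit, eta_mul, inv_inv] at heta
  set τ := (p x)⁻¹ * t * (p x) with hτ
  have hτrefl : cs.IsReflection τ := by
    have := htrefl.conj (p x)⁻¹
    rwa [inv_inv] at this
  have hτP : τ ∈ parabolic cs I :=
    mul_mem (mul_mem (inv_mem (hp_mem cs p hp x)) htP) (hp_mem cs p hp x)
  have h1 : eta cs (((p x)⁻¹ * x)⁻¹) τ = 1 := by
    rcases eta_eq_one_or cs (((p x)⁻¹ * x)⁻¹) τ with h' | h'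
    · exact h'
    · exfalso
      exact xI_no cs (hp_XI cs p hp x) hτP hτrefl ((nl_iff_eta cs hτrefl).mpr h')
  rw [h1, one_mul] at heta
  exact (nl_iff_eta cs htrefl).mpr heta

lemma wle_p_of_parab (hp : IsParabolicProj cs I p) {c w : W} (hc : c ∈ parabolic cs I)
    (h : wle cs c w) : wle cs c (p w) := by
  apply wle_of_nl_imp cs (cs.length c) c (p w) le_rfl
  intro t ht hnl
  exact nl_p cs p hp (nl_mono cs h hnl) (nl_mem_parab cs hc ht hnl) ht

lemma p_mono (hp : IsParabolicProj cs I p) {x u : W} (h : wle cs x u) :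
    wle cs (p x) (p u) := by
  apply wle_of_nl_imp cs (cs.length (p x)) (p x) (p u) le_rfl
  intro t ht hnl
  have htP := nl_mem_parab cs (hp_mem cs p hp x) ht hnl
  have h1 : NL cs x t := nl_mono cs (hp_wle cs p hp x) hnl
  have h2 : NL cs u t := nl_mono cs h h1
  exact nl_p cs p hp h2 htP ht

/-! ### Greatest lower bound machinery -/

lemma wle_up {z u : W} (i : A) (hnz : ¬ NL cs z (cs.simple i)) (hu : NL cs u (cs.simple i))
    (h : wle cs z (cs.simple i * u)) : wle cs (cs.simple i * z) u := by
  have h1 : cs.length (cs.simple i * z) = cs.length z + 1 := cs.not_isLeftDescent_iff.mp hnz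
  have h2 : cs.length (cs.simple i * u) + 1 = cs.length u := cs.isLeftDescent_iff.mp hu
  show cs.length (cs.simple i * z) + cs.length ((cs.simple i * z)⁻¹ * u) = cs.length u
  have e : (cs.simple i * z)⁻¹ * u = z⁻¹ * (cs.simple i * u) := by
    rw [mul_inv_rev, cs.inv_simple, mul_assoc]
  rw [e, h1]
  have h3 := wle_def cs h
  omega

lemma exists_maxlb (u v : W) : ∃ z, wle cs z u ∧ wle cs z v ∧
    ∀ y, wle cs y u → wle cs y v → cs.length y ≤ cs.length z := by
  set S := {n : ℕ | ∃ c : W, (wle cs c u ∧ wle cs c v) ∧ cs.length c = n} with hS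
  have hne : S.Nonempty := ⟨0, 1, ⟨wle_one cs u, wle_one cs v⟩, cs.length_one⟩
  have hbdd : BddAbove S := by
    refine ⟨cs.length u, ?_⟩
    rintro n ⟨c, ⟨hcu, _⟩, rfl⟩
    exact wle_length cs hcu
  obtain ⟨c, ⟨hcu, hcv⟩, hclen⟩ := Nat.sSup_mem hne hbdd
  refine ⟨c, hcu, hcv, fun y hyu hyv => ?_⟩
  rw [hclen]
  exact le_csSup hbdd ⟨y, ⟨hyu, hyv⟩, rfl⟩

lemma maxlb_glb : ∀ (n : ℕ) (u v z c : W), wle cs z u → wle cs z v →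
    (∀ y, wle cs y u → wle cs y v → cs.length y ≤ cs.length z) →
    wle cs c u → wle cs c v → cs.length c ≤ n → wle cs c z := by
  intro n
  induction n with
  | zero =>
    intro u v z c _ _ _ _ _ hc
    have : c = 1 := cs.length_eq_zero_iff.mp (by omega)
    subst this
    exact wle_one cs z
  | succ n ih =>
    intro u v z c hzu hzv hzmax hcu hcv hc
    by_cases h1 : c = 1
    · subst h1; exact wle_one cs z
    · obtain ⟨i, hi⟩ := cs.exists_leftDescent_of_ne_one h1
      have hnc : NL cs c (cs.simple i) := hi
      have hnu : NL cs u (cs.simple i) := nl_mono cs hcu hnc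
      have hnv : NL cs v (cs.simple i) := nl_mono cs hcv hnc
      have hnz : NL cs z (cs.simple i) := by
        by_contra hnz
        have j1 : wle cs z (cs.simple i * u) :=
          Jdagger cs hzu (cs.isReflection_simple i) (cs.isLeftDescent_iff.mp hnu) hnz
        have j2 : wle cs z (cs.simple i * v) :=
          Jdagger cs hzv (cs.isReflection_simple i) (cs.isLeftDescent_iff.mp hnv) hnz
        have u1 : wle cs (cs.simple i * z) u := wle_up cs i hnz hnu j1
        have u2 : wle cs (cs.simple i * z) v := wle_up cs i hnz hnv j2
        have hle := hzmax _ u1 u2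
        have hlen : cs.length (cs.simple i * z) = cs.length z + 1 :=
          cs.not_isLeftDescent_iff.mp hnz
        omega
      have hmax' : ∀ y, wle cs y (cs.simple i * u) → wle cs y (cs.simple i * v) →
          cs.length y ≤ cs.length (cs.simple i * z) := by
        intro y hyu hyv
        have hny : ¬ NL cs y (cs.simple i) := by
          intro hny
          have hcontr := nl_mono cs hyu hny
          unfold NL at hcontr
          rw [cs.simple_mul_simple_cancel_left] at hcontr
          have h2 := cs.isLeftDescent_iff.mp hnu
          omega
        have hle := hzmax _ (wle_up cs i hny hnu hyu) (wle_up cs i hny hnv hyv)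
        have e1 : cs.length (cs.simple i * y) = cs.length y + 1 :=
          cs.not_isLeftDescent_iff.mp hny
        have e2 : cs.length (cs.simple i * z) + 1 = cs.length z :=
          cs.isLeftDescent_iff.mp hnz
        omega
      have hclen : cs.length (cs.simple i * c) + 1 = cs.length c := cs.isLeftDescent_iff.mp hnc
      have hrec := ih (cs.simple i * u) (cs.simple i * v) (cs.simple i * z) (cs.simple i * c)
        (wle_cancel cs i hnz hnu hzu) (wle_cancel cs i hnz hnv hzv) hmax'
        (wle_cancel cs i hnc hnu hcu) (wle_cancel cs i hnc hnv hcv) (by omega)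
      have e3 := wle_def cs hrec
      show cs.length c + cs.length (c⁻¹ * z) = cs.length z
      rw [show c⁻¹ * z = (cs.simple i * c)⁻¹ * (cs.simple i * z) by group]
      have e4 : cs.length (cs.simple i * z) + 1 = cs.length z := cs.isLeftDescent_iff.mp hnz
      omega

/-! ### Theorem S: the key induction -/

lemma thmS (hp : IsParabolicProj cs I p) (X : Set W) (u : W) (hu : IsJoin cs X u) :
    ∀ (n : ℕ) (b : W), b ∈ parabolic cs I → wle cs b u → (∀ x ∈ X, wle cs (p x) b) →
    cs.length (b⁻¹ * u) ≤ n → ∀ j ∈ I, ¬ NL cs (b⁻¹ * u) (cs.simple j) := by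
  intro n
  induction n with
  | zero =>
    intro b _ _ _ hlen j _ hnl
    have : b⁻¹ * u = 1 := cs.length_eq_zero_iff.mp (by omega)
    rw [this] at hnl
    unfold NL at hnl
    simp at hnl
  | succ n ih =>
    intro b hbP hbu hpxb hlen j hjI hnl
    have hdesc : cs.length (cs.simple j * (b⁻¹ * u)) + 1 = cs.length (b⁻¹ * u) :=
      cs.isLeftDescent_iff.mp hnl
    have h3 := wle_def cs hbu
    have hmul : cs.length (b * cs.simple j) = cs.length b + 1 := by
      rcases cs.length_mul_simple b j with h | h
      · exact h
      · exfalso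
        have halg : (b * cs.simple j) * (cs.simple j * (b⁻¹ * u)) = u := by
          rw [mul_assoc, ← mul_assoc (cs.simple j), cs.simple_mul_simple_self, one_mul,
            mul_inv_cancel_left]
        have htri := cs.length_mul_le (b * cs.simple j) ((cs.simple j) * (b⁻¹ * u))
        rw [halg] at htri
        omega
    have hble : wle cs (b * cs.simple j) u := by
      show cs.length (b * cs.simple j) + cs.length ((b * cs.simple j)⁻¹ * u) = cs.length u
      rw [show (b * cs.simple j)⁻¹ * u = cs.simple j * (b⁻¹ * u) by
        rw [mul_inv_rev, cs.inv_simple, mul_assoc]]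
      omega
    have hpxb' : ∀ x ∈ X, wle cs (p x) (b * cs.simple j) := by
      intro x hx
      refine wle_trans cs (hpxb x hx) ?_
      show cs.length b + cs.length (b⁻¹ * (b * cs.simple j)) = cs.length (b * cs.simple j)
      rw [inv_mul_cancel_left, cs.length_simple]
      omega
    have hbsP : b * cs.simple j ∈ parabolic cs I := mul_mem hbP (simple_mem_parab cs hjI)
    have h5 := wle_def cs hble
    have hXIres : XI cs I ((b * cs.simple j)⁻¹ * u) := by
      intro j' hj' hnl'
      exact ih (b * cs.simple j) hbsP hble hpxb' (by omega) j' hj' hnl'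
    set τ := b * cs.simple j * b⁻¹ with hτ
    have hτrefl : cs.IsReflection τ := ⟨b, j, rfl⟩
    have hτP : τ ∈ parabolic cs I :=
      mul_mem (mul_mem hbP (simple_mem_parab cs hjI)) (inv_mem hbP)
    have hco : cs.length (τ * u) + 1 = cs.length u := by
      have halg : τ * u = b * ((b * cs.simple j)⁻¹ * u) := by
        rw [hτ, mul_inv_rev, cs.inv_simple]
        group
      rw [halg, parab_XI_add' cs hbP hXIres]
      omega
    have hx0 : ∃ x ∈ X, ¬ wle cs x (τ * u) := by
      by_contra hall
      push_neg at hall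
      have hle := hu.2 (τ * u) hall
      have h2 := wle_def cs hle
      omega
    obtain ⟨x₀, hx₀X, hx₀⟩ := hx0
    have hnlx₀ : NL cs x₀ τ := by
      by_contra hn
      exact hx₀ (Jdagger cs (hu.1 x₀ hx₀X) hτrefl hco hn)
    have hnlp : NL cs (p x₀) τ := nl_p cs p hp hnlx₀ hτP hτrefl
    have hnlb : NL cs b τ := nl_mono cs (hpxb x₀ hx₀X) hnlp
    unfold NL at hnlb
    rw [show τ * b = b * cs.simple j by rw [hτ]; group] at hnlb
    omega

end Stmt15Aux

/-- For a bounded subset `X ⊆ W`, `p_I(⋁X) = ⋁ p_I(X)`. -/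
theorem stmt_15 (cs : CoxeterSystem M W) (I : Set A) (p : W → W)
    (hp : IsParabolicProj cs I p) (X : Set W) (hX : Bounded cs X)
    (u : W) (hu : IsJoin cs X u) :
    IsJoin cs (p '' X) (p u) := by
  classical
  constructor
  · rintro z ⟨x, hx, rfl⟩
    exact Stmt15Aux.p_mono cs p hp (hu.1 x hx)
  · intro v hv
    have hpxv : ∀ x ∈ X, wle cs (p x) v := fun x hx => hv _ ⟨x, hx, rfl⟩
    have hpxu : ∀ x ∈ X, wle cs (p x) u := fun x hx =>
      Stmt15Aux.wle_trans cs (Stmt15Aux.p_mono cs p hp (hu.1 x hx))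
        (Stmt15Aux.hp_wle cs p hp u)
    obtain ⟨z, hzu, hzv, hzmax⟩ := Stmt15Aux.exists_maxlb cs u v
    have hglb : ∀ x ∈ X, wle cs (p x) z := fun x hx =>
      Stmt15Aux.maxlb_glb cs (cs.length (p x)) u v z (p x) hzu hzv hzmax
        (hpxu x hx) (hpxv x hx) le_rfl
    have hbP : p z ∈ parabolic cs I := (hp z).1
    have hbu : wle cs (p z) u := Stmt15Aux.wle_trans cs (Stmt15Aux.hp_wle cs p hp z) hzu
    have hpxb : ∀ x ∈ X, wle cs (p x) (p z) := fun x hx =>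
      Stmt15Aux.wle_p_of_parab cs p hp (Stmt15Aux.hp_mem cs p hp x) (hglb x hx)
    have hXI : Stmt15Aux.XI cs I ((p z)⁻¹ * u) := by
      intro j hjI
      exact Stmt15Aux.thmS cs p hp X u hu (cs.length ((p z)⁻¹ * u)) (p z) hbP hbu hpxb
        le_rfl j hjI
    have heq : (p z) * ((p z)⁻¹ * u) = (p u) * ((p u)⁻¹ * u) := by group
    have hpu : p z = p u := Stmt15Aux.parab_decomp_unique cs hbP hXI
      (Stmt15Aux.hp_mem cs p hp u) (Stmt15Aux.hp_XI cs p hp u) heq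
    rw [← hpu]
    exact Stmt15Aux.wle_trans cs (Stmt15Aux.hp_wle cs p hp z) hzv
end

section
/- If W is a finite Coxeter group, then W itself is the smallest Garside shadow in (W,S), and the automaton A_W (with states W, initial state e, transitions w →^s sw whenever ℓ(sw) > ℓ(w), all states final) is the minimal automaton recognizing the language of reduced words: no two distinct states w, w' are equivalent, i.e., for distinct u, v ∈ W there exist s_1,…,s_k ∈ S with s_k⋯s_1 u reduced but s_k⋯s_1 v not reduced (or vice versa). -/
open CoxeterSystem List

variable {A W : Type*} [Group W] {M : CoxeterMatrix A}

namespace GarsideAux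

noncomputable local instance : DecidableEq W := Classical.decEq W

/-- The sign-flipping map used to build the reflection representation. -/
noncomputable def sigmaFun (cs : CoxeterSystem M W) (i : A) : W × ℤˣ → W × ℤˣ :=
  fun p => (cs.simple i * p.1 * cs.simple i, if p.1 = cs.simple i then -p.2 else p.2)

variable (cs : CoxeterSystem M W)

lemma sigmaFun_apply (i : A) (t : W) (ε : ℤˣ) :
    sigmaFun cs i (t, ε)
      = (cs.simple i * t * cs.simple i, if t = cs.simple i then -ε else ε) := rfl

lemma sigmaFun_involutive (i : A) : Function.Involutive (sigmaFun cs i) := by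
  rintro ⟨t, ε⟩
  rw [sigmaFun_apply, sigmaFun_apply]
  have h1 : cs.simple i * (cs.simple i * t * cs.simple i) * cs.simple i = t := by
    rw [← mul_assoc, ← mul_assoc, cs.simple_mul_simple_self, one_mul, mul_assoc,
      cs.simple_mul_simple_self, mul_one]
  have h2 : (cs.simple i * t * cs.simple i = cs.simple i) ↔ (t = cs.simple i) := by
    constructor
    · intro h
      have := congrArg (fun x => cs.simple i * x * cs.simple i) h
      simpa [h1, cs.simple_mul_simple_self, mul_assoc] using this
    · rintro rfl
      rw [cs.simple_mul_simple_self, one_mul]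
  by_cases h : t = cs.simple i
  · simp [h, h1, h2]
  · simp [h, h1, h2]

noncomputable def sigma (i : A) : Equiv.Perm (W × ℤˣ) := (sigmaFun_involutive cs i).toPerm

lemma sigma_apply (i : A) (t : W) (ε : ℤˣ) :
    sigma cs i (t, ε)
      = (cs.simple i * t * cs.simple i, if t = cs.simple i then -ε else ε) :=
  sigmaFun_apply cs i t ε

lemma pow_swap (i j : A) (n : ℕ) :
    cs.simple j * (cs.simple i * cs.simple j) ^ n
      = (cs.simple j * cs.simple i) ^ n * cs.simple j := by
  induction n with
  | zero => simp
  | succ n ih =>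
    rw [pow_succ, ← mul_assoc, ih, pow_succ]
    group

lemma pow_inv (i j : A) (n : ℕ) :
    ((cs.simple i * cs.simple j) ^ n)⁻¹ = (cs.simple j * cs.simple i) ^ n := by
  rw [← inv_pow, mul_inv_rev, cs.inv_simple, cs.inv_simple]
lemma conj_eq_iff (P t x : W) : (P * t * P⁻¹ = x) ↔ (t = P⁻¹ * x * P) := by
  constructor
  · rintro rfl; group
  · rintro rfl; group

lemma pow_conj_j (i j : A) (n : ℕ) :
    ((cs.simple i * cs.simple j) ^ n)⁻¹ * cs.simple j * (cs.simple i * cs.simple j) ^ n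
      = (cs.simple j * cs.simple i) ^ (2 * n) * cs.simple j := by
  rw [pow_inv, mul_assoc, pow_swap, two_mul, pow_add, mul_assoc]

lemma pow_conj_i (i j : A) (n : ℕ) :
    (cs.simple j * (cs.simple i * cs.simple j) ^ n)⁻¹ * cs.simple i *
      (cs.simple j * (cs.simple i * cs.simple j) ^ n)
      = (cs.simple j * cs.simple i) ^ (2 * n + 1) * cs.simple j := by
  induction n with
  | zero => simp [cs.inv_simple]
  | succ n ih =>
    have h1 : cs.simple j * (cs.simple i * cs.simple j) ^ (n + 1)
        = (cs.simple j * (cs.simple i * cs.simple j) ^ n) * (cs.simple i * cs.simple j) := by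
      rw [pow_succ]; group
    rw [h1, mul_inv_rev]
    have h2 : (cs.simple i * cs.simple j)⁻¹ = cs.simple j * cs.simple i := by
      rw [mul_inv_rev, cs.inv_simple, cs.inv_simple]
    calc (cs.simple i * cs.simple j)⁻¹ * (cs.simple j * (cs.simple i * cs.simple j) ^ n)⁻¹ *
          cs.simple i * (cs.simple j * (cs.simple i * cs.simple j) ^ n *
            (cs.simple i * cs.simple j))
        = (cs.simple i * cs.simple j)⁻¹ *
            ((cs.simple j * (cs.simple i * cs.simple j) ^ n)⁻¹ * cs.simple i *
              (cs.simple j * (cs.simple i * cs.simple j) ^ n)) *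
            (cs.simple i * cs.simple j) := by group
      _ = (cs.simple j * cs.simple i) *
            ((cs.simple j * cs.simple i) ^ (2 * n + 1) * cs.simple j) *
            (cs.simple i * cs.simple j) := by rw [ih, h2]
      _ = (cs.simple j * cs.simple i) ^ ((2 * n + 1) + 1) * cs.simple j *
            cs.simple i * cs.simple j := by
            conv_rhs => rw [pow_succ']
            simp only [mul_assoc]
      _ = (cs.simple j * cs.simple i) ^ (2 * (n + 1) + 1) * cs.simple j := by
            rw [show 2 * (n + 1) + 1 = ((2 * n + 1) + 1) + 1 by ring]
            conv_rhs => rw [pow_succ]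
            simp only [mul_assoc]
lemma sigma_pow_apply (i j : A) (n : ℕ) (t : W) (ε : ℤˣ) :
    ((sigma cs i * sigma cs j) ^ n) (t, ε)
      = ((cs.simple i * cs.simple j) ^ n * t * ((cs.simple i * cs.simple j) ^ n)⁻¹,
        ε * ∏ k ∈ Finset.range (2 * n),
          (if t = (cs.simple j * cs.simple i) ^ k * cs.simple j then (-1 : ℤˣ) else 1)) := by
  induction n with
  | zero => simp
  | succ n ih =>
    rw [pow_succ', Equiv.Perm.mul_apply, ih, Equiv.Perm.mul_apply, sigma_apply, sigma_apply]
    set P := (cs.simple i * cs.simple j) ^ n with hP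
    have hc1 : (P * t * P⁻¹ = cs.simple j)
        ↔ (t = (cs.simple j * cs.simple i) ^ (2 * n) * cs.simple j) := by
      rw [conj_eq_iff, pow_conj_j cs i j n]
    have hc2 : (cs.simple j * (P * t * P⁻¹) * cs.simple j = cs.simple i)
        ↔ (t = (cs.simple j * cs.simple i) ^ (2 * n + 1) * cs.simple j) := by
      have e1 : cs.simple j * (P * t * P⁻¹) * cs.simple j
          = (cs.simple j * P) * t * (cs.simple j * P)⁻¹ := by
        rw [mul_inv_rev, cs.inv_simple]; group
      have hpci := pow_conj_i cs i j n
      rw [← hP] at hpci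
      rw [e1, conj_eq_iff, hpci]
    have hre : 2 * (n + 1) = (2 * n) + 1 + 1 := by ring
    rw [hre, Finset.prod_range_succ, Finset.prod_range_succ]
    apply Prod.ext
    · simp only
      rw [pow_succ', mul_inv_rev, ← hP]
      rw [mul_inv_rev, cs.inv_simple, cs.inv_simple]
      simp only [mul_assoc]
    · simp only
      by_cases h1 : t = (cs.simple j * cs.simple i) ^ (2 * n) * cs.simple j
      · have e1 : P * t * P⁻¹ = cs.simple j := hc1.mpr h1
        by_cases h2 : t = (cs.simple j * cs.simple i) ^ (2 * n + 1) * cs.simple j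
        · have e2 : cs.simple j * (P * t * P⁻¹) * cs.simple j = cs.simple i := hc2.mpr h2
          rw [if_pos e1, e2, if_pos rfl, if_pos h1, if_pos h2]
          simp [mul_neg, neg_mul, neg_neg, mul_one, mul_assoc]
        · have e2 : ¬ (cs.simple j * (P * t * P⁻¹) * cs.simple j = cs.simple i) :=
            fun h => h2 (hc2.mp h)
          rw [if_pos e1, if_neg e2, if_pos h1, if_neg h2]
          simp [mul_neg, neg_mul, neg_neg, mul_one, mul_assoc]
      · have e1 : ¬ (P * t * P⁻¹ = cs.simple j) := fun h => h1 (hc1.mp h)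
        by_cases h2 : t = (cs.simple j * cs.simple i) ^ (2 * n + 1) * cs.simple j
        · have e2 : cs.simple j * (P * t * P⁻¹) * cs.simple j = cs.simple i := hc2.mpr h2
          rw [if_neg e1, e2, if_pos rfl, if_neg h1, if_pos h2]
          simp [mul_neg, neg_mul, neg_neg, mul_one, mul_assoc]
        · have e2 : ¬ (cs.simple j * (P * t * P⁻¹) * cs.simple j = cs.simple i) :=
            fun h => h2 (hc2.mp h)
          rw [if_neg e1, if_neg e2, if_neg h1, if_neg h2]
          simp [mul_neg, neg_mul, neg_neg, mul_one, mul_assoc]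

lemma sigma_liftable : M.IsLiftable (sigma cs) := by
  intro i j
  ext ⟨t, ε⟩ : 1
  rw [sigma_pow_apply, cs.simple_mul_simple_pow]
  have hper : ∀ k, (cs.simple j * cs.simple i) ^ (M i j + k) * cs.simple j
      = (cs.simple j * cs.simple i) ^ k * cs.simple j := by
    intro k
    rw [pow_add, M.symmetric i j, cs.simple_mul_simple_pow j i, one_mul]
  have hprod : ∏ k ∈ Finset.range (2 * M i j),
      (if t = (cs.simple j * cs.simple i) ^ k * cs.simple j then (-1 : ℤˣ) else 1) = 1 := by
    rw [two_mul, Finset.prod_range_add]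
    have he : ∀ k, (if t = (cs.simple j * cs.simple i) ^ (M i j + k) * cs.simple j
        then (-1 : ℤˣ) else 1)
        = (if t = (cs.simple j * cs.simple i) ^ k * cs.simple j then (-1 : ℤˣ) else 1) := by
      intro k
      rw [hper k]
    calc (∏ k ∈ Finset.range (M i j),
            (if t = (cs.simple j * cs.simple i) ^ k * cs.simple j then (-1 : ℤˣ) else 1)) *
          ∏ k ∈ Finset.range (M i j),
            (if t = (cs.simple j * cs.simple i) ^ (M i j + k) * cs.simple j then (-1 : ℤˣ) else 1)
        = (∏ k ∈ Finset.range (M i j),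
            (if t = (cs.simple j * cs.simple i) ^ k * cs.simple j then (-1 : ℤˣ) else 1)) *
          ∏ k ∈ Finset.range (M i j),
            (if t = (cs.simple j * cs.simple i) ^ k * cs.simple j then (-1 : ℤˣ) else 1) := by
          rw [Finset.prod_congr rfl (fun k _ => he k)]
      _ = 1 := Int.units_mul_self _
  rw [hprod]
  simp
noncomputable def mu : W →* Equiv.Perm (W × ℤˣ) := cs.lift ⟨sigma cs, sigma_liftable cs⟩

lemma mu_simple (i : A) : mu cs (cs.simple i) = sigma cs i :=
  cs.lift_apply_simple (sigma_liftable cs) i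

lemma sign_prod_eq (t : W) (l : List W) :
    ((l.map fun x => if t = x then (-1 : ℤˣ) else 1).prod) = (-1 : ℤˣ) ^ (l.count t) := by
  induction l with
  | nil => simp
  | cons a l ih =>
    rw [List.map_cons, List.prod_cons, ih, List.count_cons]
    by_cases h : a = t
    · rw [if_pos h.symm, if_pos]
      · rw [pow_add, pow_one, mul_comm]
      · exact beq_iff_eq.mpr h
    · rw [if_neg (fun hh => h hh.symm), if_neg]
      · simp
      · simpa using h

lemma mu_wordProd_inv (ω : List A) (t : W) (ε : ℤˣ) :
    mu cs (cs.wordProd ω)⁻¹ (t, ε) =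
      ((cs.wordProd ω)⁻¹ * t * cs.wordProd ω,
        ε * ((cs.leftInvSeq ω).map fun x => if t = x then (-1 : ℤˣ) else 1).prod) := by
  induction ω generalizing t ε with
  | nil => simp [cs.wordProd_nil]
  | cons i ω ih =>
    rw [cs.wordProd_cons, mul_inv_rev, map_mul, Equiv.Perm.mul_apply, cs.inv_simple,
      mu_simple, sigma_apply, ih]
    have hlis : cs.leftInvSeq (i :: ω)
        = cs.simple i :: List.map (⇑(MulAut.conj (cs.simple i))) (cs.leftInvSeq ω) := rfl
    rw [hlis]
    apply Prod.ext
    · simp only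
      simp only [mul_assoc]
    · simp only [List.map_cons, List.prod_cons, List.map_map]
      have hmap : ∀ x : W,
          ((fun y => if t = y then (-1 : ℤˣ) else 1) ∘ ⇑(MulAut.conj (cs.simple i))) x
            = if cs.simple i * t * cs.simple i = x then (-1 : ℤˣ) else 1 := by
        intro x
        simp only [Function.comp_apply, MulAut.conj_apply, cs.inv_simple]
        by_cases h : t = cs.simple i * x * cs.simple i
        · rw [if_pos h, if_pos]
          rw [h, ← mul_assoc, ← mul_assoc, cs.simple_mul_simple_self, one_mul,
            mul_assoc, cs.simple_mul_simple_self, mul_one]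
        · rw [if_neg h, if_neg]
          intro hh
          apply h
          rw [← hh, ← mul_assoc, ← mul_assoc, cs.simple_mul_simple_self, one_mul,
            mul_assoc, cs.simple_mul_simple_self, mul_one]
      rw [List.map_congr_left (fun x _ => hmap x)]
      by_cases h : t = cs.simple i
      · simp only [if_pos h, mul_neg, neg_mul, one_mul, mul_assoc]
      · simp only [if_neg h, mul_neg, neg_mul, one_mul, mul_assoc]

/-- The sign of `t` at `w`: `-1` iff `t` is a left inversion of `w`. -/
noncomputable def eta (w t : W) : ℤˣ := (mu cs w⁻¹ (t, 1)).2

lemma eta_wordProd (ω : List A) (t : W) :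
    eta cs (cs.wordProd ω) t = (-1 : ℤˣ) ^ ((cs.leftInvSeq ω).count t) := by
  rw [eta, mu_wordProd_inv, sign_prod_eq]
  simp

lemma mu_inv_apply (w t : W) (ε : ℤˣ) :
    mu cs w⁻¹ (t, ε) = (w⁻¹ * t * w, ε * eta cs w t) := by
  obtain ⟨ω, -, rfl⟩ := cs.exists_reduced_word w
  rw [mu_wordProd_inv, eta, mu_wordProd_inv]
  simp
lemma eta_mul (x y t : W) : eta cs (x * y) t = eta cs x t * eta cs y (x⁻¹ * t * x) := by
  have h1 : mu cs (x * y)⁻¹ (t, 1) = ((x * y)⁻¹ * t * (x * y), 1 * eta cs (x * y) t) :=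
    mu_inv_apply cs (x * y) t 1
  have h2 : mu cs (x * y)⁻¹ (t, 1) = mu cs y⁻¹ (mu cs x⁻¹ (t, 1)) := by
    rw [mul_inv_rev, map_mul, Equiv.Perm.mul_apply]
  rw [mu_inv_apply cs x t 1, mu_inv_apply cs y (x⁻¹ * t * x) (1 * eta cs x t)] at h2
  have h3 := congrArg Prod.snd (h1.symm.trans h2)
  simpa [mul_assoc] using h3

lemma eta_one_left (t : W) : eta cs 1 t = 1 := by
  rw [eta]
  simp

lemma eta_sq (w t : W) : eta cs w t * eta cs w t = 1 := Int.units_mul_self _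

lemma eta_inv_left (w t : W) : eta cs w⁻¹ (w⁻¹ * t * w) = eta cs w t := by
  have h := eta_mul cs w w⁻¹ t
  rw [mul_inv_cancel, eta_one_left] at h
  have h2 := congrArg (fun z => eta cs w t * z) h
  simpa [← mul_assoc, eta_sq] using h2.symm

lemma eta_simple_self (i : A) : eta cs (cs.simple i) (cs.simple i) = -1 := by
  have h := eta_wordProd cs [i] (cs.simple i)
  have hω : cs.wordProd [i] = cs.simple i := by simp [cs.wordProd_cons, cs.wordProd_nil]
  have hl : cs.leftInvSeq [i] = [cs.simple i] := cs.leftInvSeq_singleton i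
  rw [hω, hl] at h
  simpa using h

lemma eta_reflection_self {t : W} (ht : cs.IsReflection t) : eta cs t t = -1 := by
  obtain ⟨v, i, rfl⟩ := ht
  set t := v * cs.simple i * v⁻¹ with hts
  have h1 : t = v * (cs.simple i * v⁻¹) := by rw [hts]; group
  have h2 : eta cs t t = eta cs v t * eta cs (cs.simple i * v⁻¹) (v⁻¹ * t * v) := by
    have := eta_mul cs v (cs.simple i * v⁻¹) t
    rwa [← h1] at this
  have h3 : v⁻¹ * t * v = cs.simple i := by rw [hts]; group
  have h4 : eta cs (cs.simple i * v⁻¹) (cs.simple i)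
      = eta cs (cs.simple i) (cs.simple i) *
        eta cs v⁻¹ ((cs.simple i)⁻¹ * cs.simple i * cs.simple i) :=
    eta_mul cs (cs.simple i) v⁻¹ (cs.simple i)
  have h5 : (cs.simple i)⁻¹ * cs.simple i * cs.simple i = cs.simple i := by group
  have h6 : eta cs v⁻¹ (cs.simple i) = eta cs v t := by
    have := eta_inv_left cs v t
    rwa [h3] at this
  rw [h2, h3, h4, h5, eta_simple_self, h6]
  have : eta cs v t * (-1 * eta cs v t) = -1 * (eta cs v t * eta cs v t) := by
    simp [mul_comm, mul_assoc, mul_left_comm]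
  rw [this, eta_sq]
  simp

lemma inversion_of_eta_neg {w t : W} (h : eta cs w t = -1) :
    cs.length (t * w) < cs.length w := by
  obtain ⟨ω, hred, rfl⟩ := cs.exists_reduced_word' w
  have hcount : (cs.leftInvSeq ω).count t ≠ 0 := by
    intro hc
    rw [eta_wordProd, hc, pow_zero] at h
    exact absurd h (by decide)
  have hmem : t ∈ cs.leftInvSeq ω := List.count_pos_iff.mp (Nat.pos_of_ne_zero hcount)
  exact (cs.isLeftInversion_of_mem_leftInvSeq hred hmem).2

lemma eta_neg_of_inversion {w t : W} (hr : cs.IsReflection t)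
    (hl : cs.length (t * w) < cs.length w) : eta cs w t = -1 := by
  by_contra hne
  have h1 : eta cs w t = 1 := by
    rcases Int.units_eq_one_or (eta cs w t) with h | h
    · exact h
    · exact absurd h hne
  have hW : w = t * (t * w) := by rw [← mul_assoc, hr.mul_self, one_mul]
  have h2 : eta cs w t = eta cs t t * eta cs (t * w) (t⁻¹ * t * t) := by
    conv_lhs => rw [hW]
    exact eta_mul cs t (t * w) t
  rw [eta_reflection_self cs hr, inv_mul_cancel, one_mul] at h2
  rw [h1] at h2
  have h3 : eta cs (t * w) t = -1 := by
    rcases Int.units_eq_one_or (eta cs (t * w) t) with h | h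
    · rw [h] at h2; exact absurd h2.symm (by decide)
    · exact h
  have h4 := inversion_of_eta_neg cs h3
  rw [← hW] at h4
  omega

lemma eta_neg_iff_inversion {w t : W} (hr : cs.IsReflection t) :
    eta cs w t = -1 ↔ cs.length (t * w) < cs.length w :=
  ⟨inversion_of_eta_neg cs, eta_neg_of_inversion cs hr⟩

lemma length_eq_ncard_inversions (w : W) :
    cs.length w = {t | cs.IsLeftInversion w t}.ncard := by
  obtain ⟨ω, hred, rfl⟩ := cs.exists_reduced_word' w
  have hset : {t | cs.IsLeftInversion (cs.wordProd ω) t} = {t | t ∈ cs.leftInvSeq ω} := by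
    ext t
    constructor
    · intro ht
      have hη : eta cs (cs.wordProd ω) t = -1 := eta_neg_of_inversion cs ht.1 ht.2
      rw [eta_wordProd] at hη
      have : (cs.leftInvSeq ω).count t ≠ 0 := by
        intro hc
        rw [hc, pow_zero] at hη
        exact absurd hη (by decide)
      exact List.count_pos_iff.mp (Nat.pos_of_ne_zero this)
    · intro ht
      exact cs.isLeftInversion_of_mem_leftInvSeq hred ht
  rw [hset]
  have : {t | t ∈ cs.leftInvSeq ω} = ((cs.leftInvSeq ω).toFinset : Set W) := by
    ext t; simp
  rw [this, Set.ncard_coe_finset, List.toFinset_card_of_nodup hred.nodup_leftInvSeq,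
    cs.length_leftInvSeq]
  exact hred
section MaxElement

variable [Finite W] (w₀ : W) (hmax : ∀ w, cs.length w ≤ cs.length w₀)

include hmax in
/-- Every two-sided factorization of a maximal length element is reduced. -/
lemma length_add_length_eq (u : W) :
    cs.length u + cs.length (u⁻¹ * w₀) = cs.length w₀ := by
  set v := u⁻¹ * w₀ with hv
  have huv : w₀ = u * v := by rw [hv]; group
  set Iu := {t | cs.IsLeftInversion u t} with hIu
  set Iv := {t | cs.IsLeftInversion v t} with hIv
  set J := (fun t => u * t * u⁻¹) '' Iv with hJ
  have hJmem : ∀ t : W, t ∈ J ↔ cs.IsLeftInversion v (u⁻¹ * t * u) := by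
    intro t
    constructor
    · rintro ⟨x, hx, rfl⟩
      have e : u⁻¹ * (u * x * u⁻¹) * u = x := by group
      rwa [e]
    · intro h
      exact ⟨u⁻¹ * t * u, h, by group⟩
  have hw0 : {t | cs.IsLeftInversion w₀ t} = {t | cs.IsReflection t} := by
    ext t
    exact ⟨fun ht => ht.1,
      fun ht => ⟨ht, lt_of_le_of_ne (hmax _) (ht.length_mul_right_ne w₀)⟩⟩
  have hcover : {t | cs.IsReflection t} = Iu ∪ J := by
    ext t
    constructor
    · intro ht
      have hη : eta cs w₀ t = -1 := by
        apply eta_neg_of_inversion cs ht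
        exact lt_of_le_of_ne (hmax _) (ht.length_mul_right_ne w₀)
      rw [huv, eta_mul] at hη
      rcases Int.units_eq_one_or (eta cs u t) with h1 | h1
      · right
        rw [h1, one_mul] at hη
        rw [hJmem]
        refine ⟨?_, inversion_of_eta_neg cs hη⟩
        have h2 := ht.conj u⁻¹
        rwa [inv_inv] at h2
      · left
        exact ⟨ht, inversion_of_eta_neg cs h1⟩
    · rintro (ht | ht)
      · exact ht.1
      · rw [hJmem t] at ht
        have h2 := (ht.1).conj u
        have e : u * (u⁻¹ * t * u) * u⁻¹ = t := by group
        rwa [e] at h2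
  have hdisj : Disjoint Iu J := by
    rw [Set.disjoint_left]
    intro t htu htJ
    rw [hJmem t] at htJ
    have hηw : eta cs w₀ t = -1 := by
      apply eta_neg_of_inversion cs htu.1
      exact lt_of_le_of_ne (hmax _) ((htu.1).length_mul_right_ne w₀)
    have h1 : eta cs u t = -1 := eta_neg_of_inversion cs htu.1 htu.2
    have h2 : eta cs v (u⁻¹ * t * u) = -1 := eta_neg_of_inversion cs htJ.1 htJ.2
    rw [huv, eta_mul, h1, h2] at hηw
    exact absurd hηw (by decide)
  have hcards : cs.length w₀ = cs.length u + cs.length v := by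
    have e0 : cs.length w₀ = {t | cs.IsReflection t}.ncard := by
      rw [length_eq_ncard_inversions cs w₀, hw0]
    have e1 : {t | cs.IsReflection t}.ncard = Iu.ncard + J.ncard := by
      rw [hcover]
      exact Set.ncard_union_eq hdisj (Set.toFinite _) (Set.toFinite _)
    have e2 : J.ncard = Iv.ncard := by
      rw [hJ]
      apply Set.ncard_image_of_injective
      intro a b hab
      simpa using mul_left_cancel (mul_right_cancel hab)
    rw [e0, e1, e2, ← length_eq_ncard_inversions cs u, ← length_eq_ncard_inversions cs v]
  omega

include hmax in
lemma suffix_form (x : W) :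
    cs.length (w₀ * x⁻¹) + cs.length x = cs.length w₀ := by
  have h := length_add_length_eq cs w₀ hmax (w₀ * x⁻¹)
  have e : (w₀ * x⁻¹)⁻¹ * w₀ = x := by group
  rwa [e] at h

include hmax in
lemma full_descent_eq (u : W) (hd : ∀ i, cs.length (cs.simple i * u) < cs.length u) :
    u = w₀ := by
  by_contra hne
  have hy : w₀ * u⁻¹ ≠ 1 := by
    intro h
    apply hne
    have := congrArg (· * u) h
    simpa using this.symm
  obtain ⟨i, hi⟩ := cs.exists_rightDescent_of_ne_one hy
  have hw : w₀ = (w₀ * u⁻¹ * cs.simple i) * (cs.simple i * u) := by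
    rw [mul_assoc, cs.simple_mul_simple_cancel_left]
    group
  have hle : cs.length w₀
      ≤ cs.length (w₀ * u⁻¹ * cs.simple i) + cs.length (cs.simple i * u) := by
    conv_lhs => rw [hw]
    exact cs.length_mul_le _ _
  have hsf := suffix_form cs w₀ hmax u
  have hdi := hd i
  have hdesc : cs.length (w₀ * u⁻¹ * cs.simple i) < cs.length (w₀ * u⁻¹) := hi
  omega

end MaxElement

end GarsideAux

/-- If `W` is finite, then `W` itself is the smallest Garside shadow (every
Garside shadow is all of `W`), and the automaton `A_W` is minimal: any two
distinct states `u ≠ v` are non-equivalent, i.e. some word `s_k ⋯ s_1` is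
reduced when appended to exactly one of `u`, `v`. -/
theorem stmt_19 (cs : CoxeterSystem M W) [Finite W] :
    (∀ Bs : Set W, IsGarsideShadow cs Bs → Bs = Set.univ) ∧
    (∀ u v : W, u ≠ v → ∃ l : List A,
      ¬ ((cs.length (cs.wordProd l * u) = l.length + cs.length u) ↔
         (cs.length (cs.wordProd l * v) = l.length + cs.length v))) := by
  classical
  have hne : Nonempty W := ⟨1⟩
  obtain ⟨w₀, hmax⟩ := Finite.exists_max cs.length
  have F1 : ∀ u : W, cs.length u + cs.length (u⁻¹ * w₀) = cs.length w₀ :=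
    GarsideAux.length_add_length_eq cs w₀ hmax
  have FS : ∀ x : W, cs.length (w₀ * x⁻¹) + cs.length x = cs.length w₀ :=
    GarsideAux.suffix_form cs w₀ hmax
  constructor
  · intro Bs hGS
    obtain ⟨h1, h2, h3⟩ := hGS
    have hw₀ : w₀ ∈ Bs := by
      apply h2 (Set.range cs.simple) ?_ ?_ w₀ ?_
      · rintro x ⟨i, rfl⟩
        exact h1 i
      · exact ⟨w₀, fun x _ => F1 x⟩
      · constructor
        · exact fun x _ => F1 x
        · intro z hz
          have hfull : ∀ i, cs.length (cs.simple i * z) < cs.length z := by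
            intro i
            have hzi := hz (cs.simple i) ⟨i, rfl⟩
            rw [wle, cs.length_simple, cs.inv_simple] at hzi
            omega
          have hzw := GarsideAux.full_descent_eq cs w₀ hmax z hfull
          rw [wle, hzw]
          simp
    apply Set.eq_univ_of_forall
    intro v
    exact h3 w₀ hw₀ v (FS v)
  · intro u v huv
    have antisym : wle cs v u → wle cs u v → False := by
      intro hh1 hh2
      rw [wle] at hh1 hh2
      have hz : cs.length (u⁻¹ * v) = 0 := by omega
      have hz1 : u⁻¹ * v = 1 := cs.length_eq_zero_iff.mp hz
      apply huv
      have := congrArg (u * ·) hz1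
      simpa using this.symm
    by_cases hvu : wle cs v u
    · have hnu : ¬ wle cs u v := fun h => antisym hvu h
      obtain ⟨l, hlen, hprod⟩ := cs.exists_reduced_word (w₀ * v⁻¹)
      refine ⟨l, ?_⟩
      have hPv : cs.length (cs.wordProd l * v) = l.length + cs.length v := by
        rw [← hprod, ← hlen.eq, ← hprod]
        have e : w₀ * v⁻¹ * v = w₀ := by group
        rw [e]
        exact (FS v).symm
      have hPu : ¬ (cs.length (cs.wordProd l * u) = l.length + cs.length u) := by
        intro hq
        rw [← hprod, ← hlen.eq, ← hprod] at hq
        have e : w₀ * v⁻¹ * u = w₀ * (u⁻¹ * v)⁻¹ := by group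
        rw [e] at hq
        have h4 := FS (u⁻¹ * v)
        have h5 := FS v
        apply hnu
        rw [wle]
        omega
      intro hiff
      exact hPu (hiff.mpr hPv)
    · obtain ⟨l, hlen, hprod⟩ := cs.exists_reduced_word (w₀ * u⁻¹)
      refine ⟨l, ?_⟩
      have hPu : cs.length (cs.wordProd l * u) = l.length + cs.length u := by
        rw [← hprod, ← hlen.eq, ← hprod]
        have e : w₀ * u⁻¹ * u = w₀ := by group
        rw [e]
        exact (FS u).symm
      have hPv : ¬ (cs.length (cs.wordProd l * v) = l.length + cs.length v) := by
        intro hq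
        rw [← hprod, ← hlen.eq, ← hprod] at hq
        have e : w₀ * u⁻¹ * v = w₀ * (v⁻¹ * u)⁻¹ := by group
        rw [e] at hq
        have h4 := FS (v⁻¹ * u)
        have h5 := FS u
        apply hvu
        rw [wle]
        omega
      intro hiff
      exact hPv (hiff.mp hPu)
end
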